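/- arXiv:2312.15669 — 6 statements merged into one kernel-verified Lean document; each statement's English description precedes it below -/
import Mathlib

section
/- Let f be the Casoratian f = |0,1,…,N−1|_{[l1]} built from the vector ψ with entries ψ_j(n1,n2,l1,x) = ρ_j^+ e^{k_j x} k_j^{l1} (a1+k_j)^{n1}(a2+k_j)^{n2} + ρ_j^- e^{−k_j x} (−k_j)^{l1} (a1−k_j)^{n1}(a2−k_j)^{n2}. Then at every (n1,n2,l1,x): (i) f = |0,1,…,N−1|_{[x]} (the Wronskian in x) and f = |0,1,…,N−1|_{[n_σ]} for σ = 1,2; and (ii) g := |0,…,N−2,N|_{[l1]} satisfies g = |0,…,N−2,N|_{[x]} = ∂_x f and g = |0,…,N−2,N|_{[n_σ]} − a_σ N f for σ = 1,2. -/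
lemma hasDerivAt_cexp_real (c : ℂ) (x : ℝ) :
    HasDerivAt (fun t : ℝ => Complex.exp (c * t)) (c * Complex.exp (c * x)) x := by
  have h1 : HasDerivAt (fun t : ℝ => c * (t : ℂ)) c x := by
    simpa using (Complex.ofRealCLM.hasDerivAt (x := x)).const_mul c
  simpa [mul_comm] using h1.cexp

lemma aux_iter (P Q c d : ℂ) : ∀ (m : ℕ) (x : ℝ),
    iteratedDeriv m (fun t : ℝ => P * Complex.exp (c * t) + Q * Complex.exp (d * t)) x
      = P * c ^ m * Complex.exp (c * x) + Q * d ^ m * Complex.exp (d * x) := by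
  intro m
  induction m with
  | zero => intro x; simp
  | succ m ih =>
    intro x
    rw [iteratedDeriv_succ]
    have he : iteratedDeriv m (fun t : ℝ => P * Complex.exp (c * t) + Q * Complex.exp (d * t))
        = fun y : ℝ => P * c ^ m * Complex.exp (c * y) + Q * d ^ m * Complex.exp (d * y) :=
      funext fun y => ih y
    rw [he]
    have h := ((hasDerivAt_cexp_real c x).const_mul (P * c ^ m)).fun_add
      ((hasDerivAt_cexp_real d x).const_mul (Q * d ^ m))
    rw [h.deriv]
    ring


open Polynomial in
lemma aux_av (N : ℕ) (hN : 1 ≤ N) (γ : Fin N → ℂ) :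
    (Matrix.of fun i m : Fin N => γ i ^ (if (m : ℕ) = N - 1 then N else (m : ℕ))).det
      = (∑ i, γ i) * (Matrix.vandermonde γ).det := by
  obtain ⟨q, rfl⟩ : ∃ q, N = q + 1 := ⟨N - 1, by omega⟩
  simp only [Nat.add_sub_cancel]
  set w : Fin (q + 2) → ℂ[X] := Fin.cons X (fun i => C (γ i)) with hw
  set D : ℂ := (Matrix.vandermonde γ).det with hD
  set c : Fin (q + 2) → ℂ := fun j =>
    (Matrix.of fun (i m : Fin (q + 1)) => γ i ^ ((j.succAbove m : Fin (q + 2)) : ℕ)).det with hc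
  have hA : (Matrix.vandermonde w).det
      = ∑ j : Fin (q + 2), (-1) ^ (j : ℕ) * X ^ (j : ℕ) * C (c j) := by
    rw [Matrix.det_succ_row_zero]
    refine Finset.sum_congr rfl fun j _ => ?_
    have h1 : (Matrix.vandermonde w) 0 j = X ^ (j : ℕ) := by
      rw [Matrix.vandermonde_apply, hw, Fin.cons_zero]
    have h2 : ((Matrix.vandermonde w).submatrix Fin.succ j.succAbove)
        = (Matrix.of fun (i m : Fin (q + 1)) => γ i ^ ((j.succAbove m : Fin (q + 2)) : ℕ)).map C := by
      ext i m
      simp only [Matrix.submatrix_apply, Matrix.vandermonde_apply, Matrix.map_apply,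
        Matrix.of_apply, hw, Fin.cons_succ, map_pow]
    rw [h1, h2]
    congr 1
    exact (RingHom.map_det C _).symm
  have hB : (Matrix.vandermonde w).det
      = (∏ i : Fin (q + 1), (C (γ i) - X)) * C D := by
    rw [Matrix.det_vandermonde, Fin.prod_univ_succ]
    congr 1
    · rw [Fin.prod_Ioi_zero]
      refine Finset.prod_congr rfl fun i _ => ?_
      simp [hw]
    · rw [hD, Matrix.det_vandermonde, map_prod]
      refine Finset.prod_congr rfl fun i _ => ?_
      rw [Fin.prod_Ioi_succ, map_prod]
      refine Finset.prod_congr rfl fun jj _ => ?_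
      simp [hw]
  have hco := congrArg (fun p : ℂ[X] => p.coeff q) (hA.symm.trans hB)
  simp only [finset_sum_coeff] at hco
  set j0 : Fin (q + 2) := ⟨q, by omega⟩ with hj0
  have hiff : ∀ j : Fin (q + 2), (q = (j : ℕ)) ↔ (j = j0) := by
    intro j; rw [Fin.ext_iff]; simp [hj0]; omega
  have hterm : ∀ j : Fin (q + 2), ((-1) ^ (j : ℕ) * X ^ (j : ℕ) * C (c j)).coeff q
      = if j = j0 then (-1 : ℂ) ^ q * c j else 0 := by
    intro j
    rw [coeff_mul_C, show ((-1 : ℂ[X]) ^ (j : ℕ) * X ^ (j : ℕ))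
        = C ((-1) ^ (j : ℕ)) * X ^ (j : ℕ) by simp, coeff_C_mul, coeff_X_pow]
    by_cases h : j = j0
    · have hv : (j : ℕ) = q := by rw [h]
      simp [h, hv, show ((j0 : Fin (q + 2)) : ℕ) = q from rfl]
    · have hv : ¬ (q = (j : ℕ)) := fun hh => h ((hiff j).mp hh)
      simp [h, hv]
  simp only [hterm, Finset.sum_ite_eq' Finset.univ j0, Finset.mem_univ, if_true] at hco
  -- RHS coefficient
  have hprod : (∏ i : Fin (q + 1), (C (γ i) - X))
      = (-1 : ℂ[X]) ^ (q + 1) * ∏ i : Fin (q + 1), (X - C (γ i)) := by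
    calc (∏ i : Fin (q + 1), (C (γ i) - X))
        = ∏ i : Fin (q + 1), ((-1) * (X - C (γ i))) := by
          refine Finset.prod_congr rfl fun i _ => ?_; ring
      _ = (-1 : ℂ[X]) ^ (q + 1) * ∏ i : Fin (q + 1), (X - C (γ i)) := by
          rw [Finset.prod_mul_distrib, Finset.prod_const, Finset.card_univ, Fintype.card_fin]
  have hdeg : (∏ i : Fin (q + 1), (X - C (γ i))).natDegree = q + 1 := by
    rw [Polynomial.natDegree_prod _ _ (fun i _ => X_sub_C_ne_zero (γ i))]
    simp [natDegree_X_sub_C]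
  have hcoeff : (∏ i : Fin (q + 1), (X - C (γ i))).coeff q = -∑ i, γ i := by
    have h1 := prod_X_sub_C_nextCoeff (s := (Finset.univ : Finset (Fin (q + 1)))) (f := γ)
    rwa [nextCoeff_of_natDegree_pos (by rw [hdeg]; omega), hdeg, Nat.add_sub_cancel] at h1
  have hrhs : ((∏ i : Fin (q + 1), (C (γ i) - X)) * C D).coeff q
      = (-1 : ℂ) ^ (q + 1) * (-∑ i, γ i) * D := by
    rw [coeff_mul_C, hprod, show ((-1 : ℂ[X]) ^ (q + 1)) = C ((-1) ^ (q + 1)) by simp,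
      coeff_C_mul, hcoeff]
  rw [hrhs] at hco
  have hfin : ((-1 : ℂ)) ^ q * c j0 = ((-1 : ℂ)) ^ q * ((∑ i, γ i) * D) := by
    rw [hco]; ring
  have hc0 := mul_left_cancel₀ (pow_ne_zero q (by norm_num : (-1 : ℂ) ≠ 0)) hfin
  have hsa : ∀ m : Fin (q + 1),
      ((j0.succAbove m : Fin (q + 2)) : ℕ) = if (m : ℕ) = q then q + 1 else (m : ℕ) := by
    intro m
    rcases Nat.lt_or_ge (m : ℕ) q with h | h
    · rw [Fin.succAbove_of_castSucc_lt _ _ (by simp [Fin.lt_def, hj0]; omega)]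
      rw [Fin.coe_castSucc, if_neg (by omega)]
    · have hm : (m : ℕ) = q := by omega
      rw [Fin.succAbove_of_le_castSucc _ _ (by simp [Fin.le_def, hj0]; omega)]
      simp [Fin.val_succ, hm]
  rw [← hc0, hc]
  congr 1
  ext i m
  simp only [Matrix.of_apply, hsa m]


lemma aux_expand {N : ℕ} (U V : Fin N → ℂ) (A B : Fin N → Fin N → ℂ) :
    (Matrix.of fun j m => U j * A j m + V j * B j m).det
      = ∑ ε : Fin N → Bool,
          (∏ j, if ε j then U j else V j) *
            (Matrix.of fun j m => if ε j then A j m else B j m).det := by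
  have key := MultilinearMap.map_sum
      (Matrix.detRowAlternating (R := ℂ) (n := Fin N)).toMultilinearMap
      (fun j (b : Bool) => (if b then U j else V j) • (if b then A j else B j))
  have h1 : (fun j => ∑ b : Bool, (if b then U j else V j) • (if b then A j else B j))
      = (Matrix.of fun j m => U j * A j m + V j * B j m) := by
    funext j m
    simp [Fintype.sum_bool, Finset.sum_apply]
  rw [h1] at key
  have h2 : (Matrix.of fun j m => U j * A j m + V j * B j m).det
      = Matrix.detRowAlternating (R := ℂ) (n := Fin N)
          (Matrix.of fun j m => U j * A j m + V j * B j m) := rfl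
  rw [h2]
  rw [show (Matrix.detRowAlternating (R := ℂ) (n := Fin N))
        (Matrix.of fun j m => U j * A j m + V j * B j m)
      = (Matrix.detRowAlternating (R := ℂ) (n := Fin N)).toMultilinearMap
        (Matrix.of fun j m => U j * A j m + V j * B j m) from rfl, key]
  refine Finset.sum_congr rfl fun ε _ => ?_
  rw [MultilinearMap.map_smul_univ]
  have h3 : (fun j => if ε j then A j else B j)
      = (Matrix.of fun j m => if ε j then A j m else B j m) := by
    funext j m
    by_cases h : ε j <;> simp [h]
  rw [h3]
  simp [smul_eq_mul]
  exact Or.inl rfl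

lemma L1 (N : ℕ) (k u v : Fin N → ℂ) (t : ℝ) (a : ℂ) (E : Fin N → ℕ) :
    (Matrix.of fun j m : Fin N =>
      (u j * Complex.exp (k j * t)) * (a + k j) ^ E m
        + (v j * Complex.exp (-(k j) * t)) * (a - k j) ^ E m).det
    = ∑ ε : Fin N → Bool,
        ((∏ j, if ε j then u j else v j)
            * Complex.exp ((∑ j, if ε j then k j else -(k j)) * t))
          * (Matrix.of fun j m : Fin N =>
              (a + (if ε j then k j else -(k j))) ^ E m).det := by
  refine (aux_expand (fun j => u j * Complex.exp (k j * t))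
    (fun j => v j * Complex.exp (-(k j) * t))
    (fun j m => (a + k j) ^ E m) (fun j m => (a - k j) ^ E m)).trans ?_
  refine Finset.sum_congr rfl fun ε _ => ?_
  congr 1
  · have h1 : ∀ j, (if ε j then u j * Complex.exp (k j * t)
        else v j * Complex.exp (-(k j) * t))
        = (if ε j then u j else v j)
            * Complex.exp ((if ε j then k j else -(k j)) * t) := by
      intro j; by_cases h : ε j <;> simp [h]
    rw [Finset.prod_congr rfl fun j _ => h1 j, Finset.prod_mul_distrib,
      ← Complex.exp_sum, ← Finset.sum_mul]
  · congr 1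
    ext j m
    by_cases h : ε j <;> simp [h, sub_eq_add_neg]

lemma L2 (N : ℕ) (a : ℂ) (γ : Fin N → ℂ) :
    (Matrix.of fun j m : Fin N => (a + γ j) ^ (m.1 : ℕ)).det
      = (Matrix.vandermonde γ).det := by
  have h1 : (Matrix.of fun j m : Fin N => (a + γ j) ^ (m.1 : ℕ))
      = Matrix.vandermonde (fun j => γ j + a) := by
    ext j m; simp [Matrix.vandermonde]; ring_nf
  rw [h1, Matrix.det_vandermonde_add]

lemma L3 (N : ℕ) (hN : 1 ≤ N) (a : ℂ) (γ : Fin N → ℂ) :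
    (Matrix.of fun j m : Fin N => (a + γ j) ^ (if (m.1 : ℕ) = N - 1 then N else (m.1 : ℕ))).det
      = ((N : ℂ) * a + ∑ j, γ j) * (Matrix.vandermonde γ).det := by
  refine (aux_av N hN (fun j => a + γ j)).trans ?_
  congr 1
  · rw [Finset.sum_add_distrib, Finset.sum_const, Finset.card_univ, Fintype.card_fin]
    simp [nsmul_eq_mul]
  · have h1 : (fun j => a + γ j) = fun j => γ j + a := by funext j; ring
    rw [h1, Matrix.det_vandermonde_add]

/-- Lemma 3.1: the Casoratian `f = |0,…,N−1|_{[l1]}` and `g = |0,…,N−2,N|_{[l1]}` built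
from the H1 entries can equally be written as Wronskians in `x` or as Casoratians in
the directions `n1`, `n2`; moreover `g = ∂_x f` and
`g = |0,…,N−2,N|_{[n_σ]} − a_σ N f` for `σ = 1,2`. -/
theorem stmt_0 (N : ℕ) (hN : 1 ≤ N) (a1 a2 : ℂ) (k ρp ρm : Fin N → ℂ)
    (hk : ∀ j, k j ≠ 0)
    (ha1 : ∀ j, a1 + k j ≠ 0) (ha1' : ∀ j, a1 - k j ≠ 0)
    (ha2 : ∀ j, a2 + k j ≠ 0) (ha2' : ∀ j, a2 - k j ≠ 0)
    (ψ : Fin N → ℤ → ℤ → ℤ → ℝ → ℂ)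
    (hψ : ∀ j n1 n2 l1 x, ψ j n1 n2 l1 x =
      ρp j * Complex.exp (k j * (x : ℂ)) * (k j) ^ l1 *
        (a1 + k j) ^ n1 * (a2 + k j) ^ n2 +
      ρm j * Complex.exp (-(k j) * (x : ℂ)) * (-(k j)) ^ l1 *
        (a1 - k j) ^ n1 * (a2 - k j) ^ n2)
    (f g : ℤ → ℤ → ℤ → ℝ → ℂ)
    (hf : ∀ n1 n2 l1 x, f n1 n2 l1 x =
      (Matrix.of fun j m : Fin N => ψ j n1 n2 (l1 + (m.1 : ℤ)) x).det)
    (hg : ∀ n1 n2 l1 x, g n1 n2 l1 x =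
      (Matrix.of fun j m : Fin N =>
        ψ j n1 n2 (l1 + (if m.1 = N - 1 then (N : ℤ) else (m.1 : ℤ))) x).det) :
    ∀ n1 n2 l1 : ℤ, ∀ x : ℝ,
      -- (i) f as a Wronskian in x and as Casoratians in n1 and n2
      (f n1 n2 l1 x =
        (Matrix.of fun j m : Fin N =>
          iteratedDeriv m.1 (fun t => ψ j n1 n2 l1 t) x).det) ∧
      (f n1 n2 l1 x =
        (Matrix.of fun j m : Fin N => ψ j (n1 + (m.1 : ℤ)) n2 l1 x).det) ∧
      (f n1 n2 l1 x =
        (Matrix.of fun j m : Fin N => ψ j n1 (n2 + (m.1 : ℤ)) l1 x).det) ∧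
      -- (ii) g as the x-Wronskian with derivative orders 0,…,N−2,N, as ∂_x f,
      -- and as the shifted Casoratians in n1, n2 minus a_σ N f
      (g n1 n2 l1 x =
        (Matrix.of fun j m : Fin N =>
          iteratedDeriv (if m.1 = N - 1 then N else m.1)
            (fun t => ψ j n1 n2 l1 t) x).det) ∧
      (g n1 n2 l1 x = deriv (fun t => f n1 n2 l1 t) x) ∧
      (g n1 n2 l1 x =
        (Matrix.of fun j m : Fin N =>
          ψ j (n1 + (if m.1 = N - 1 then (N : ℤ) else (m.1 : ℤ))) n2 l1 x).det -
        a1 * (N : ℂ) * f n1 n2 l1 x) ∧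
      (g n1 n2 l1 x =
        (Matrix.of fun j m : Fin N =>
          ψ j n1 (n2 + (if m.1 = N - 1 then (N : ℤ) else (m.1 : ℤ))) l1 x).det -
        a2 * (N : ℂ) * f n1 n2 l1 x) := by
  intro n1 n2 l1 x
  set u : Fin N → ℂ := fun j => ρp j * k j ^ l1 * (a1 + k j) ^ n1 * (a2 + k j) ^ n2 with hu
  set v : Fin N → ℂ := fun j => ρm j * (-(k j)) ^ l1 * (a1 - k j) ^ n1 * (a2 - k j) ^ n2 with hv
  -- entry identities
  have e1 : ∀ (t : ℝ) (j : Fin N) (i : ℕ), ψ j n1 n2 (l1 + (i : ℤ)) t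
      = (u j * Complex.exp (k j * t)) * (k j) ^ i
        + (v j * Complex.exp (-(k j) * t)) * (-(k j)) ^ i := by
    intro t j i
    rw [hψ, zpow_add₀ (hk j) l1 (i : ℤ), zpow_natCast,
      zpow_add₀ (neg_ne_zero.mpr (hk j)) l1 (i : ℤ), zpow_natCast]
    simp only [hu, hv]
    ring
  have e2 : ∀ (j : Fin N) (i : ℕ), ψ j (n1 + (i : ℤ)) n2 l1 x
      = (u j * Complex.exp (k j * x)) * (a1 + k j) ^ i
        + (v j * Complex.exp (-(k j) * x)) * (a1 - k j) ^ i := by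
    intro j i
    rw [hψ, zpow_add₀ (ha1 j) n1 (i : ℤ), zpow_natCast,
      zpow_add₀ (ha1' j) n1 (i : ℤ), zpow_natCast]
    simp only [hu, hv]
    ring
  have e3 : ∀ (j : Fin N) (i : ℕ), ψ j n1 (n2 + (i : ℤ)) l1 x
      = (u j * Complex.exp (k j * x)) * (a2 + k j) ^ i
        + (v j * Complex.exp (-(k j) * x)) * (a2 - k j) ^ i := by
    intro j i
    rw [hψ, zpow_add₀ (ha2 j) n2 (i : ℤ), zpow_natCast,
      zpow_add₀ (ha2' j) n2 (i : ℤ), zpow_natCast]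
    simp only [hu, hv]
    ring
  have e4 : ∀ (j : Fin N) (i : ℕ), iteratedDeriv i (fun t => ψ j n1 n2 l1 t) x
      = (u j * Complex.exp (k j * x)) * (k j) ^ i
        + (v j * Complex.exp (-(k j) * x)) * (-(k j)) ^ i := by
    intro j i
    have hΦ : (fun t : ℝ => ψ j n1 n2 l1 t)
        = fun t : ℝ => (ρp j * k j ^ l1 * (a1 + k j) ^ n1 * (a2 + k j) ^ n2)
              * Complex.exp (k j * t)
            + (ρm j * (-(k j)) ^ l1 * (a1 - k j) ^ n1 * (a2 - k j) ^ n2)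
              * Complex.exp (-(k j) * t) := by
      funext s; rw [hψ]; ring
    rw [hΦ, aux_iter]
    simp only [hu, hv]
    ring
  have hiz : ∀ m : Fin N, (if m.1 = N - 1 then (N : ℤ) else (m.1 : ℤ))
      = (((if m.1 = N - 1 then N else m.1 : ℕ)) : ℤ) := by
    intro m; split_ifs <;> simp
  -- expansion of f
  have HF : ∀ t : ℝ, f n1 n2 l1 t = ∑ ε : Fin N → Bool,
      ((∏ j, if ε j then u j else v j)
          * Complex.exp ((∑ j, if ε j then k j else -(k j)) * t))
        * (Matrix.vandermonde (fun j => if ε j then k j else -(k j))).det := by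
    intro t
    rw [hf]
    have hm : (Matrix.of fun j m : Fin N => ψ j n1 n2 (l1 + (m.1 : ℤ)) t)
        = Matrix.of (fun j m : Fin N =>
            (u j * Complex.exp (k j * t)) * ((0 : ℂ) + k j) ^ (m.1 : ℕ)
              + (v j * Complex.exp (-(k j) * t)) * ((0 : ℂ) - k j) ^ (m.1 : ℕ)) := by
      ext j m
      simp only [Matrix.of_apply]
      rw [zero_add, zero_sub, e1 t j m.1]
    rw [hm]
    refine (L1 N k u v t 0 (fun m => m.1)).trans ?_
    refine Finset.sum_congr rfl fun ε _ => ?_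
    congr 1
    exact L2 N 0 (fun j => if ε j then k j else -(k j))
  -- expansion of g
  have HG : g n1 n2 l1 x = ∑ ε : Fin N → Bool,
      ((∏ j, if ε j then u j else v j)
          * Complex.exp ((∑ j, if ε j then k j else -(k j)) * x))
        * (((N : ℂ) * 0 + ∑ j, if ε j then k j else -(k j))
            * (Matrix.vandermonde (fun j => if ε j then k j else -(k j))).det) := by
    rw [hg]
    have hm : (Matrix.of fun j m : Fin N =>
          ψ j n1 n2 (l1 + (if m.1 = N - 1 then (N : ℤ) else (m.1 : ℤ))) x)
        = Matrix.of (fun j m : Fin N =>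
            (u j * Complex.exp (k j * x))
                * ((0 : ℂ) + k j) ^ (if m.1 = N - 1 then N else m.1)
              + (v j * Complex.exp (-(k j) * x))
                * ((0 : ℂ) - k j) ^ (if m.1 = N - 1 then N else m.1)) := by
      ext j m
      simp only [Matrix.of_apply]
      rw [hiz m, zero_add, zero_sub, e1 x j (if m.1 = N - 1 then N else m.1)]
    rw [hm]
    refine (L1 N k u v x 0 (fun m => if m.1 = N - 1 then N else m.1)).trans ?_
    refine Finset.sum_congr rfl fun ε _ => ?_
    congr 1
    exact L3 N hN 0 (fun j => if ε j then k j else -(k j))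
  refine ⟨?_, ?_, ?_, ?_, ?_, ?_, ?_⟩
  · -- f = Wronskian
    rw [hf]
    congr 1
    ext j m
    simp only [Matrix.of_apply]
    rw [e1 x j m.1, e4 j m.1]
  · -- f = n1 Casoratian
    have hm : (Matrix.of fun j m : Fin N => ψ j (n1 + (m.1 : ℤ)) n2 l1 x)
        = Matrix.of (fun j m : Fin N =>
            (u j * Complex.exp (k j * x)) * (a1 + k j) ^ (m.1 : ℕ)
              + (v j * Complex.exp (-(k j) * x)) * (a1 - k j) ^ (m.1 : ℕ)) := by
      ext j m
      simp only [Matrix.of_apply]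
      rw [e2 j m.1]
    rw [HF x, hm]
    refine Eq.symm ((L1 N k u v x a1 (fun m => m.1)).trans ?_)
    refine Finset.sum_congr rfl fun ε _ => ?_
    congr 1
    exact L2 N a1 (fun j => if ε j then k j else -(k j))
  · -- f = n2 Casoratian
    have hm : (Matrix.of fun j m : Fin N => ψ j n1 (n2 + (m.1 : ℤ)) l1 x)
        = Matrix.of (fun j m : Fin N =>
            (u j * Complex.exp (k j * x)) * (a2 + k j) ^ (m.1 : ℕ)
              + (v j * Complex.exp (-(k j) * x)) * (a2 - k j) ^ (m.1 : ℕ)) := by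
      ext j m
      simp only [Matrix.of_apply]
      rw [e3 j m.1]
    rw [HF x, hm]
    refine Eq.symm ((L1 N k u v x a2 (fun m => m.1)).trans ?_)
    refine Finset.sum_congr rfl fun ε _ => ?_
    congr 1
    exact L2 N a2 (fun j => if ε j then k j else -(k j))
  · -- g = Wronskian variant
    rw [hg]
    congr 1
    ext j m
    simp only [Matrix.of_apply]
    rw [hiz m, e1 x j (if m.1 = N - 1 then N else m.1),
      e4 j (if m.1 = N - 1 then N else m.1)]
  · -- g = ∂ₓ f
    have hfun : (fun t => f n1 n2 l1 t) = fun t : ℝ => ∑ ε : Fin N → Bool,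
        ((∏ j, if ε j then u j else v j)
            * Complex.exp ((∑ j, if ε j then k j else -(k j)) * t))
          * (Matrix.vandermonde (fun j => if ε j then k j else -(k j))).det :=
      funext fun t => HF t
    rw [HG, hfun]
    have hd : HasDerivAt (fun t : ℝ => ∑ ε : Fin N → Bool,
        ((∏ j, if ε j then u j else v j)
            * Complex.exp ((∑ j, if ε j then k j else -(k j)) * t))
          * (Matrix.vandermonde (fun j => if ε j then k j else -(k j))).det)
        (∑ ε : Fin N → Bool,
          ((∏ j, if ε j then u j else v j)
              * ((∑ j, if ε j then k j else -(k j))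
                  * Complex.exp ((∑ j, if ε j then k j else -(k j)) * x)))
            * (Matrix.vandermonde (fun j => if ε j then k j else -(k j))).det) x := by
      refine HasDerivAt.fun_sum fun ε _ => ?_
      exact ((hasDerivAt_cexp_real (∑ j, if ε j then k j else -(k j)) x).const_mul
        (∏ j, if ε j then u j else v j)).mul_const
        ((Matrix.vandermonde (fun j => if ε j then k j else -(k j))).det)
    rw [hd.deriv]
    refine Finset.sum_congr rfl fun ε _ => by ring
  · -- g = n1-shifted Casoratian − a1 N f
    have hm : (Matrix.of fun j m : Fin N =>
          ψ j (n1 + (if m.1 = N - 1 then (N : ℤ) else (m.1 : ℤ))) n2 l1 x)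
        = Matrix.of (fun j m : Fin N =>
            (u j * Complex.exp (k j * x))
                * (a1 + k j) ^ (if m.1 = N - 1 then N else m.1)
              + (v j * Complex.exp (-(k j) * x))
                * (a1 - k j) ^ (if m.1 = N - 1 then N else m.1)) := by
      ext j m
      simp only [Matrix.of_apply]
      rw [hiz m, e2 j (if m.1 = N - 1 then N else m.1)]
    rw [HG, HF x, hm]
    have hR : (Matrix.of (fun j m : Fin N =>
            (u j * Complex.exp (k j * x))
                * (a1 + k j) ^ (if m.1 = N - 1 then N else m.1)
              + (v j * Complex.exp (-(k j) * x))
                * (a1 - k j) ^ (if m.1 = N - 1 then N else m.1))).det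
        = ∑ ε : Fin N → Bool,
          ((∏ j, if ε j then u j else v j)
              * Complex.exp ((∑ j, if ε j then k j else -(k j)) * x))
            * (((N : ℂ) * a1 + ∑ j, if ε j then k j else -(k j))
                * (Matrix.vandermonde (fun j => if ε j then k j else -(k j))).det) :=
      (L1 N k u v x a1 (fun m => if m.1 = N - 1 then N else m.1)).trans
        (Finset.sum_congr rfl fun ε _ => by
          congr 1
          exact L3 N hN a1 (fun j => if ε j then k j else -(k j)))
    rw [hR, Finset.mul_sum, ← Finset.sum_sub_distrib]
    refine Finset.sum_congr rfl fun ε _ => by ring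
  · -- g = n2-shifted Casoratian − a2 N f
    have hm : (Matrix.of fun j m : Fin N =>
          ψ j n1 (n2 + (if m.1 = N - 1 then (N : ℤ) else (m.1 : ℤ))) l1 x)
        = Matrix.of (fun j m : Fin N =>
            (u j * Complex.exp (k j * x))
                * (a2 + k j) ^ (if m.1 = N - 1 then N else m.1)
              + (v j * Complex.exp (-(k j) * x))
                * (a2 - k j) ^ (if m.1 = N - 1 then N else m.1)) := by
      ext j m
      simp only [Matrix.of_apply]
      rw [hiz m, e3 j (if m.1 = N - 1 then N else m.1)]
    rw [HG, HF x, hm]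
    have hR : (Matrix.of (fun j m : Fin N =>
            (u j * Complex.exp (k j * x))
                * (a2 + k j) ^ (if m.1 = N - 1 then N else m.1)
              + (v j * Complex.exp (-(k j) * x))
                * (a2 - k j) ^ (if m.1 = N - 1 then N else m.1))).det
        = ∑ ε : Fin N → Bool,
          ((∏ j, if ε j then u j else v j)
              * Complex.exp ((∑ j, if ε j then k j else -(k j)) * x))
            * (((N : ℂ) * a2 + ∑ j, if ε j then k j else -(k j))
                * (Matrix.vandermonde (fun j => if ε j then k j else -(k j))).det) :=
      (L1 N k u v x a2 (fun m => if m.1 = N - 1 then N else m.1)).trans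
        (Finset.sum_congr rfl fun ε _ => by
          congr 1
          exact L3 N hN a2 (fun j => if ε j then k j else -(k j)))
    rw [hR, Finset.mul_sum, ← Finset.sum_sub_distrib]
    refine Finset.sum_congr rfl fun ε _ => by ring
end

section
/- Let a1, a2, γ0 ∈ ℂ and let f, g : ℤ² → ℂ with f(n1,n2) ≠ 0 for all (n1,n2). Suppose that at every (n1,n2) the bilinear H1 system holds: g_2 f_1 − g_1 f_2 + (a1 − a2)(f_1 f_2 − f f_12) = 0 and g f_12 − g_12 f + (a1 + a2)(f f_12 − f_1 f_2) = 0. Then u(n1,n2) := a1 n1 + a2 n2 + γ0 − g(n1,n2)/f(n1,n2) satisfies the H1 lattice equation (u − u_12)(u_1 − u_2) − (a2² − a1²) = 0 at every (n1,n2). -/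
/-- If `f, g` (with `f` nonvanishing) satisfy the bilinear H1 system, then
`u = a1 n1 + a2 n2 + γ0 − g/f` satisfies the H1 lattice equation. -/
theorem stmt_2 (a1 a2 γ0 : ℂ) (f g : ℤ → ℤ → ℂ)
    (hf : ∀ n1 n2, f n1 n2 ≠ 0)
    (hbe1 : ∀ n1 n2 : ℤ,
      g n1 (n2 + 1) * f (n1 + 1) n2 - g (n1 + 1) n2 * f n1 (n2 + 1) +
        (a1 - a2) * (f (n1 + 1) n2 * f n1 (n2 + 1) -
          f n1 n2 * f (n1 + 1) (n2 + 1)) = 0)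
    (hbe2 : ∀ n1 n2 : ℤ,
      g n1 n2 * f (n1 + 1) (n2 + 1) - g (n1 + 1) (n2 + 1) * f n1 n2 +
        (a1 + a2) * (f n1 n2 * f (n1 + 1) (n2 + 1) -
          f (n1 + 1) n2 * f n1 (n2 + 1)) = 0)
    (u : ℤ → ℤ → ℂ)
    (hu : ∀ n1 n2 : ℤ, u n1 n2 =
      a1 * n1 + a2 * n2 + γ0 - g n1 n2 / f n1 n2) :
    ∀ n1 n2 : ℤ,
      (u n1 n2 - u (n1 + 1) (n2 + 1)) * (u (n1 + 1) n2 - u n1 (n2 + 1)) -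
        (a2 ^ 2 - a1 ^ 2) = 0 := by
  intro n1 n2
  have e1 := hbe1 n1 n2
  have e2 := hbe2 n1 n2
  have h00 := hf n1 n2
  have h10 := hf (n1+1) n2
  have h01 := hf n1 (n2+1)
  have h11 := hf (n1+1) (n2+1)
  have hA : u n1 n2 - u (n1 + 1) (n2 + 1) =
      -(a1 + a2) * (f (n1+1) n2 * f n1 (n2+1)) / (f n1 n2 * f (n1+1) (n2+1)) := by
    rw [hu, hu]
    push_cast
    field_simp
    linear_combination -e2
  have hB : u (n1 + 1) n2 - u n1 (n2 + 1) =
      (a1 - a2) * (f n1 n2 * f (n1+1) (n2+1)) / (f (n1+1) n2 * f n1 (n2+1)) := by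
    rw [hu, hu]
    push_cast
    field_simp
    linear_combination e1
  rw [hA, hB]
  field_simp
  ring
end

section
/- Let a1, a2, γ0 ∈ ℂ and let f : ℤ² × ℝ → ℂ be twice differentiable in x with f(n1,n2,x) ≠ 0 for all (n1,n2,x). Suppose that at every point the bilinear H2 system holds: (∂_x² f) f_1 − 2(∂_x f)(∂_x f_1) + f(∂_x² f_1) + 2a1((∂_x f) f_1 − f(∂_x f_1)) = 0 and (∂_x² f) f_2 − 2(∂_x f)(∂_x f_2) + f(∂_x² f_2) + 2a2((∂_x f) f_2 − f(∂_x f_2)) = 0. Then, with Z = a1 n1 + a2 n2 + γ0, the function u = Z² − 2Z (∂_x f)/f + (∂_x² f)/f satisfies the H2 lattice equation (u − u_12)(u_1 − u_2) + (a1² − a2²)(u + u_1 + u_2 + u_12 − a1² − a2²) = 0 at every (n1,n2,x). -/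
/-- If `f` (nonvanishing, twice differentiable in `x`) satisfies the bilinear H2 system,
then `u = Z² − 2Z (∂ₓf)/f + (∂ₓ²f)/f` with `Z = a1 n1 + a2 n2 + γ0` satisfies the H2
lattice equation. -/
theorem stmt_6 (a1 a2 γ0 : ℂ) (f : ℤ → ℤ → ℝ → ℂ)
    (hdiff : ∀ n1 n2, Differentiable ℝ (f n1 n2))
    (hdiff2 : ∀ n1 n2, Differentiable ℝ (deriv (f n1 n2)))
    (hf : ∀ n1 n2 x, f n1 n2 x ≠ 0)
    (hbe1 : ∀ n1 n2 : ℤ, ∀ x : ℝ,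
      deriv (deriv (f n1 n2)) x * f (n1 + 1) n2 x -
        2 * deriv (f n1 n2) x * deriv (f (n1 + 1) n2) x +
        f n1 n2 x * deriv (deriv (f (n1 + 1) n2)) x +
        2 * a1 * (deriv (f n1 n2) x * f (n1 + 1) n2 x -
          f n1 n2 x * deriv (f (n1 + 1) n2) x) = 0)
    (hbe2 : ∀ n1 n2 : ℤ, ∀ x : ℝ,
      deriv (deriv (f n1 n2)) x * f n1 (n2 + 1) x -
        2 * deriv (f n1 n2) x * deriv (f n1 (n2 + 1)) x +
        f n1 n2 x * deriv (deriv (f n1 (n2 + 1))) x +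
        2 * a2 * (deriv (f n1 n2) x * f n1 (n2 + 1) x -
          f n1 n2 x * deriv (f n1 (n2 + 1)) x) = 0)
    (u : ℤ → ℤ → ℝ → ℂ)
    (hu : ∀ n1 n2 : ℤ, ∀ x : ℝ, u n1 n2 x =
      (a1 * n1 + a2 * n2 + γ0) ^ 2 -
        2 * (a1 * n1 + a2 * n2 + γ0) * (deriv (f n1 n2) x / f n1 n2 x) +
        deriv (deriv (f n1 n2)) x / f n1 n2 x) :
    ∀ n1 n2 : ℤ, ∀ x : ℝ,
      (u n1 n2 x - u (n1 + 1) (n2 + 1) x) * (u (n1 + 1) n2 x - u n1 (n2 + 1) x) +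
        (a1 ^ 2 - a2 ^ 2) * (u n1 n2 x + u (n1 + 1) n2 x + u n1 (n2 + 1) x +
          u (n1 + 1) (n2 + 1) x - a1 ^ 2 - a2 ^ 2) = 0 := by

  -- divided (scalar) form of the two bilinear equations
  have h1 : ∀ n1 n2 : ℤ, ∀ x : ℝ,
      deriv (deriv (f n1 n2)) x / f n1 n2 x
        + deriv (deriv (f (n1 + 1) n2)) x / f (n1 + 1) n2 x
        - 2 * (deriv (f n1 n2) x / f n1 n2 x) * (deriv (f (n1 + 1) n2) x / f (n1 + 1) n2 x)
        + 2 * a1 * (deriv (f n1 n2) x / f n1 n2 x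
            - deriv (f (n1 + 1) n2) x / f (n1 + 1) n2 x) = 0 := by
    intro n1 n2 x
    have h := hbe1 n1 n2 x
    have hA := hf n1 n2 x
    have hB := hf (n1 + 1) n2 x
    field_simp
    linear_combination h
  have h2 : ∀ n1 n2 : ℤ, ∀ x : ℝ,
      deriv (deriv (f n1 n2)) x / f n1 n2 x
        + deriv (deriv (f n1 (n2 + 1))) x / f n1 (n2 + 1) x
        - 2 * (deriv (f n1 n2) x / f n1 n2 x) * (deriv (f n1 (n2 + 1)) x / f n1 (n2 + 1) x)
        + 2 * a2 * (deriv (f n1 n2) x / f n1 n2 x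
            - deriv (f n1 (n2 + 1)) x / f n1 (n2 + 1) x) = 0 := by
    intro n1 n2 x
    have h := hbe2 n1 n2 x
    have hA := hf n1 n2 x
    have hB := hf n1 (n2 + 1) x
    field_simp
    linear_combination h
  intro n1 n2 x
  have e1 := h1 n1 n2 x
  have e2 := h1 n1 (n2 + 1) x
  have e3 := h2 n1 n2 x
  have e4 := h2 (n1 + 1) n2 x
  rw [hu, hu, hu, hu]
  push_cast
  set v : ℂ := deriv (f n1 n2) x / f n1 n2 x with hv
  set v1 : ℂ := deriv (f (n1 + 1) n2) x / f (n1 + 1) n2 x with hv1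
  set v2 : ℂ := deriv (f n1 (n2 + 1)) x / f n1 (n2 + 1) x with hv2
  set v12 : ℂ := deriv (f (n1 + 1) (n2 + 1)) x / f (n1 + 1) (n2 + 1) x with hv12
  set w : ℂ := deriv (deriv (f n1 n2)) x / f n1 n2 x with hw
  set w1 : ℂ := deriv (deriv (f (n1 + 1) n2)) x / f (n1 + 1) n2 x with hw1
  set w2 : ℂ := deriv (deriv (f n1 (n2 + 1))) x / f n1 (n2 + 1) x with hw2
  set w12 : ℂ := deriv (deriv (f (n1 + 1) (n2 + 1))) x / f (n1 + 1) (n2 + 1) x with hw12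
  set Z : ℂ := a1 * (n1 : ℂ) + a2 * (n2 : ℂ) + γ0 with hZ
  linear_combination
    (w - w12 - 2*v*v2 + 2*v*a2 + 2*v2*Z + 2*v12*Z + 2*v12*a1 + 2*v12*a2
      - 2*Z*Z - 2*Z*a1 - 4*Z*a2 - 2*a1*a2 - 2*a2*a2) * e1 +
    (w + w2 - 2*v*v1 - 2*v*v2 + 2*v*Z + 2*v*a1 + 2*v*a2 + 2*v1*Z - 2*v2*a2
      - 2*Z*Z - 2*Z*a1) * e2 +
    (-w - w2 + 2*v*v1 - 2*v*a1 - 2*v1*Z + 2*v2*v12 - 2*v2*a1 - 2*v12*Z - 2*v12*a2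
      + 2*Z*Z + 4*Z*a1 + 2*Z*a2 + 2*a1*a1 + 2*a1*a2) * e3 +
    (2*v*v2 - 2*v*Z - 2*v*a2 - 2*v2*Z + 2*Z*Z + 2*Z*a2) * e4
end

section
/- Let τ(n1,n2,n3) be the Casoratian in the direction n1 of the vector ψ with entries ψ_j(n1,n2,n3) = ρ_j^+ ∏_{i=1}^3 (a_i+k_j)^{n_i} + ρ_j^- ∏_{i=1}^3 (a_i−k_j)^{n_i}. Then τ satisfies the discrete AKP (Hirota–Miwa) equation at every point: (a1−a2) τ_3 τ_12 + (a2−a3) τ_1 τ_23 + (a3−a1) τ_2 τ_13 = 0. -/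
open Matrix Finset


lemma rowAlt {n : ℕ} (r : Fin (n+1) → Fin n → ℂ) (s : Fin n) :
    ∑ i : Fin (n+1), (-1)^(i:ℕ) *
      (Matrix.of fun a b => r (i.succAbove a) b).det * r i s = 0 := by
  have h0 : (Matrix.of fun i (j : Fin (n+1)) =>
      Fin.cases (r i s) (fun j' => r i j') j : Matrix (Fin (n+1)) (Fin (n+1)) ℂ).det = 0 := by
    apply Matrix.det_zero_of_column_eq (Fin.succ_ne_zero s).symm
    intro i
    simp
  rw [Matrix.det_succ_column_zero] at h0
  rw [← h0]
  apply Finset.sum_congr rfl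
  intro i _
  have hsub : ((Matrix.of fun i (j : Fin (n+1)) =>
      Fin.cases (r i s) (fun j' => r i j') j : Matrix (Fin (n+1)) (Fin (n+1)) ℂ).submatrix
        i.succAbove Fin.succ) = Matrix.of fun a b => r (i.succAbove a) b := by
    ext a b
    simp [Matrix.submatrix_apply]
  rw [hsub]
  simp only [Matrix.of_apply, Fin.cases_zero]
  ring


noncomputable def DD {N : ℕ} (rows : Fin N → Fin (N+2) → ℂ) (x y : Fin (N+2) → ℂ) : ℂ :=
  (Matrix.of (Fin.snoc (Fin.snoc rows x) y)).det

/-- index of the `x` row -/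
def ii0 (N : ℕ) : Fin (N+2) := (Fin.last N).castSucc

lemma snoc_comp_succAbove {N : ℕ} (rows : Fin N → Fin (N+2) → ℂ) (x y : Fin (N+2) → ℂ) :
    (fun a : Fin (N+1) => (Fin.snoc (Fin.snoc rows x) y : Fin (N+2) → Fin (N+2) → ℂ) ((ii0 N).succAbove a)) = Fin.snoc rows y := by
  funext a
  induction a using Fin.lastCases with
  | last =>
    have h1 : (ii0 N).succAbove (Fin.last N) = Fin.last (N+1) := by
      rw [Fin.succAbove_of_le_castSucc _ _ (by
        simp only [ii0, Fin.le_def, Fin.coe_castSucc, Fin.val_last]; exact le_refl N)]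
      exact Fin.succ_last N
    rw [h1]
    simp only [Fin.snoc_last]
  | cast b =>
    have h1 : (ii0 N).succAbove b.castSucc = (b.castSucc).castSucc := by
      rw [Fin.succAbove_of_castSucc_lt _ _ (by
        simp only [ii0, Fin.lt_def, Fin.coe_castSucc, Fin.val_last]; omega)]
    rw [h1]
    simp only [Fin.snoc_castSucc]

lemma DD_expand {N : ℕ} (rows : Fin N → Fin (N+2) → ℂ) (x y : Fin (N+2) → ℂ) :
    DD rows x y = ∑ s : Fin (N+2), (-1)^(N + (s:ℕ)) * x s *
      ((Matrix.of (Fin.snoc rows y)).submatrix id s.succAbove).det := by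
  rw [DD, Matrix.det_succ_row _ (ii0 N)]
  apply Finset.sum_congr rfl
  intro s _
  have hx : Matrix.of (Fin.snoc (Fin.snoc rows x) y) (ii0 N) s = x s := by
    simp [ii0, Fin.snoc_castSucc, Fin.snoc_last]
  have hsub : (Matrix.of (Fin.snoc (Fin.snoc rows x) y)).submatrix (ii0 N).succAbove s.succAbove
      = (Matrix.of (Fin.snoc rows y)).submatrix id s.succAbove := by
    ext a b
    simp only [Matrix.submatrix_apply, Matrix.of_apply, id]
    rw [congrFun (snoc_comp_succAbove rows x y) a]
  rw [hx, hsub]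
  norm_num [ii0]

lemma snoc_comp_castSucc_succAbove {n m : ℕ} (q : Fin (n+1) → Fin m → ℂ)
    (u : Fin m → ℂ) (i : Fin (n+1)) :
    (fun a : Fin (n+1) => (Fin.snoc q u : Fin (n+2) → Fin m → ℂ) ((i.castSucc).succAbove a))
      = Fin.snoc (fun a : Fin n => q (i.succAbove a)) u := by
  funext a
  induction a using Fin.lastCases with
  | last =>
    have h1 : (i.castSucc).succAbove (Fin.last n) = Fin.last (n+1) := by
      rw [Fin.succAbove_of_le_castSucc _ _ (by
        simp only [Fin.le_def, Fin.coe_castSucc, Fin.val_last]; omega)]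
      exact Fin.succ_last n
    rw [h1]
    simp only [Fin.snoc_last]
  | cast b =>
    rw [Fin.castSucc_succAbove_castSucc]
    simp only [Fin.snoc_castSucc]

lemma DD_antisymm {N : ℕ} (rows : Fin N → Fin (N+2) → ℂ) (x y : Fin (N+2) → ℂ) :
    DD rows x y = - DD rows y x := by
  have hne : ii0 N ≠ Fin.last (N+1) := by
    simp [ii0, Fin.ext_iff]
    try omega
  have hM : (Matrix.of (Fin.snoc (Fin.snoc rows x) y) : Matrix (Fin (N+2)) (Fin (N+2)) ℂ)
      = (Matrix.of (Fin.snoc (Fin.snoc rows y) x)).submatrix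
          (Equiv.swap (ii0 N) (Fin.last (N+1))) id := by
    ext i j
    simp only [Matrix.submatrix_apply, Matrix.of_apply, id]
    induction i using Fin.lastCases with
    | last =>
      rw [Equiv.swap_apply_right]
      simp only [Fin.snoc_last, ii0, Fin.snoc_castSucc]
    | cast a =>
      induction a using Fin.lastCases with
      | last =>
        have : (Fin.last N).castSucc = ii0 N := rfl
        rw [this, Equiv.swap_apply_left]
        simp only [Fin.snoc_last, ii0, Fin.snoc_castSucc]
      | cast b =>
        have h1 : (b.castSucc).castSucc ≠ ii0 N := by
          simp [ii0, Fin.ext_iff]; omega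
        have h2 : (b.castSucc).castSucc ≠ Fin.last (N+1) := by
          simp [Fin.ext_iff]; omega
        rw [Equiv.swap_apply_of_ne_of_ne h1 h2]
        simp only [Fin.snoc_castSucc]
  have := Matrix.det_permute (Equiv.swap (ii0 N) (Fin.last (N+1)))
      (Matrix.of (Fin.snoc (Fin.snoc rows y) x))
  rw [DD, hM]
  rw [this, Equiv.Perm.sign_swap hne]
  simp [DD]

lemma DD_dup_zero {N : ℕ} (rows : Fin N → Fin (N+2) → ℂ) (i : Fin N) (y : Fin (N+2) → ℂ) :
    DD rows (rows i) y = 0 := by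
  apply Matrix.det_zero_of_row_eq (i := (i.castSucc).castSucc) (j := ii0 N)
  · simp [ii0, Fin.ext_iff]; omega
  · funext m
    simp only [Matrix.of_apply, ii0, Fin.snoc_castSucc, Fin.snoc_last]

lemma pluecker {N : ℕ} (rows : Fin N → Fin (N+2) → ℂ) (x y z w : Fin (N+2) → ℂ) :
    DD rows x y * DD rows z w - DD rows x z * DD rows y w
      + DD rows x w * DD rows y z = 0 := by
  classical
  set r : Fin (N+3) → Fin (N+2) → ℂ := Fin.snoc (Fin.snoc (Fin.snoc rows x) z) w with hr
  have main : ∑ i : Fin (N+3), (-1:ℂ)^(i:ℕ) *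
      (Matrix.of fun a b => r (i.succAbove a) b).det * DD rows (r i) y = 0 := by
    have h1 : ∀ i : Fin (N+3), (-1:ℂ)^(i:ℕ) *
        (Matrix.of fun a b => r (i.succAbove a) b).det * DD rows (r i) y
        = ∑ s : Fin (N+2),
            ((-1:ℂ)^(N+(s:ℕ)) * ((Matrix.of (Fin.snoc rows y)).submatrix id s.succAbove).det)
            * ((-1:ℂ)^(i:ℕ) * (Matrix.of fun a b => r (i.succAbove a) b).det * r i s) := by
      intro i
      rw [DD_expand, Finset.mul_sum]
      exact Finset.sum_congr rfl (fun s _ => by ring)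
    rw [Finset.sum_congr rfl (fun i _ => h1 i), Finset.sum_comm]
    apply Finset.sum_eq_zero
    intro s _
    rw [← Finset.mul_sum, rowAlt r s, mul_zero]
  rw [Fin.sum_univ_castSucc, Fin.sum_univ_castSucc, Fin.sum_univ_castSucc] at main
  have hzero : ∀ i : Fin N, (-1:ℂ)^(((i.castSucc.castSucc.castSucc : Fin (N+3))):ℕ) *
      (Matrix.of fun a b => r ((i.castSucc.castSucc.castSucc).succAbove a) b).det
      * DD rows (r i.castSucc.castSucc.castSucc) y = 0 := by
    intro i
    have hri : r i.castSucc.castSucc.castSucc = rows i := by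
      rw [hr]
      simp only [Fin.snoc_castSucc]
    rw [hri, DD_dup_zero, mul_zero]
  rw [Finset.sum_congr rfl (fun i _ => hzero i), Finset.sum_const_zero] at main
  -- identify the three remaining terms
  have e3 : r (Fin.last (N+2)) = w := by rw [hr]; simp only [Fin.snoc_last]
  have e2 : r ((Fin.last (N+1)).castSucc) = z := by
    rw [hr]; simp only [Fin.snoc_castSucc, Fin.snoc_last]
  have e1 : r ((Fin.last N).castSucc.castSucc) = x := by
    rw [hr]; simp only [Fin.snoc_castSucc, Fin.snoc_last]
  have hm3 : (fun a : Fin (N+2) => r ((Fin.last (N+2)).succAbove a))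
      = Fin.snoc (Fin.snoc rows x) z := by
    rw [hr]
    funext a
    simp only [Fin.succAbove_last, Fin.snoc_castSucc]
  have hm2 : (fun a : Fin (N+2) => r (((Fin.last (N+1)).castSucc).succAbove a))
      = Fin.snoc (Fin.snoc rows x) w := by
    rw [hr, snoc_comp_castSucc_succAbove]
    congr 1
    funext a
    simp only [Fin.succAbove_last, Fin.snoc_castSucc]
  have hm1 : (fun a : Fin (N+2) => r (((Fin.last N).castSucc.castSucc).succAbove a))
      = Fin.snoc (Fin.snoc rows z) w := by
    rw [hr, snoc_comp_castSucc_succAbove]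
    congr 1
    rw [snoc_comp_castSucc_succAbove]
    congr 1
    funext a
    simp only [Fin.succAbove_last, Fin.snoc_castSucc]
  have d3 : (Matrix.of fun a b => r ((Fin.last (N+2)).succAbove a) b).det = DD rows x z := by
    rw [DD]
    exact congrArg Matrix.det (by funext a b; exact congrFun (congrFun hm3 a) b)
  have d2 : (Matrix.of fun a b => r (((Fin.last (N+1)).castSucc).succAbove a) b).det
      = DD rows x w := by
    rw [DD]
    exact congrArg Matrix.det (by funext a b; exact congrFun (congrFun hm2 a) b)
  have d1 : (Matrix.of fun a b => r (((Fin.last N).castSucc.castSucc).succAbove a) b).det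
      = DD rows z w := by
    rw [DD]
    exact congrArg Matrix.det (by funext a b; exact congrFun (congrFun hm1 a) b)
  rw [e1, e2, e3, d1, d2, d3] at main
  have hc3 : (((Fin.last (N+2)) : Fin (N+3)) : ℕ) = N+2 := by simp
  have hc2 : ((((Fin.last (N+1)).castSucc) : Fin (N+3)) : ℕ) = N+1 := by simp
  have hc1 : ((((Fin.last N).castSucc.castSucc) : Fin (N+3)) : ℕ) = N := by simp
  rw [hc1, hc2, hc3] at main
  have hyw : DD rows w y = - DD rows y w := by rw [DD_antisymm]
  have hyz : DD rows z y = - DD rows y z := by rw [DD_antisymm]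
  rw [hyw, hyz] at main
  have hpow : (-1:ℂ)^(N+1) = -(-1:ℂ)^N := by ring
  have hpow2 : (-1:ℂ)^(N+2) = (-1:ℂ)^N := by ring
  rw [hpow, hpow2] at main
  have hN0 : ((-1:ℂ)^N) ≠ 0 := by
    apply pow_ne_zero; norm_num
  have : (-1:ℂ)^N * (DD rows x y * DD rows z w - DD rows x z * DD rows y w
      + DD rows x w * DD rows y z) = 0 := by linear_combination main
  rcases mul_eq_zero.mp this with h | h
  · exact absurd h hN0
  · exact h
/-- upper triangular column-operation matrix: identity plus `-t` on superdiagonal -/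
noncomputable def Umat (n : ℕ) (t : ℂ) : Matrix (Fin (n+1)) (Fin (n+1)) ℂ :=
  Matrix.of fun i j => if i = j then 1 else if (i:ℕ)+1 = (j:ℕ) then -t else 0

lemma det_Umat (n : ℕ) (t : ℂ) : (Umat n t).det = 1 := by
  have h : (Umat n t).BlockTriangular id := by
    intro i j hij
    simp only [Umat, Matrix.of_apply]
    rw [if_neg, if_neg]
    · simp only [id] at hij; omega
    · intro h; exact absurd h (by simp only [id] at hij; exact Fin.ne_of_gt hij)
  rw [Matrix.det_of_upperTriangular h]
  apply Finset.prod_eq_one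
  intro i _
  simp [Umat]

noncomputable def vU {n : ℕ} (t : ℂ) (v : Fin (n+1) → ℂ) : Fin (n+1) → ℂ :=
  fun j => ∑ r, v r * Umat n t r j

lemma vU_zero {n : ℕ} (t : ℂ) (v : Fin (n+1) → ℂ) : vU t v 0 = v 0 := by
  rw [vU]
  rw [Finset.sum_eq_single 0]
  · simp [Umat]
  · intro r _ hr
    simp only [Umat, Matrix.of_apply]
    rw [if_neg hr, if_neg (by simp)]
    ring
  · simp

lemma vU_succ {n : ℕ} (t : ℂ) (v : Fin (n+1) → ℂ) (k : Fin n) :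
    vU t v k.succ = v k.succ - t * v k.castSucc := by
  rw [vU]
  have hsplit : ∀ r : Fin (n+1), v r * Umat n t r k.succ
      = (if r = k.succ then v r else 0) + (if r = k.castSucc then -t * v r else 0) := by
    intro r
    simp only [Umat, Matrix.of_apply]
    rcases eq_or_ne r k.succ with h1 | h1
    · subst h1
      rw [if_pos rfl, if_pos rfl, if_neg (by simp [Fin.ext_iff]), add_zero, mul_one]
    · rw [if_neg h1, if_neg h1, zero_add]
      rcases eq_or_ne r k.castSucc with h2 | h2
      · subst h2
        rw [if_pos (by simp [Fin.val_succ]), if_pos rfl]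
        ring
      · rw [if_neg (fun hc => h2 (Fin.ext (by
          simp only [Fin.val_succ] at hc
          simp only [Fin.coe_castSucc]
          omega))), if_neg h2]
        ring
  rw [Finset.sum_congr rfl (fun r _ => hsplit r), Finset.sum_add_distrib]
  rw [Finset.sum_ite_eq' Finset.univ k.succ (fun r => v r)]
  rw [Finset.sum_ite_eq' Finset.univ k.castSucc (fun r => -t * v r)]
  simp only [Finset.mem_univ, if_pos]
  ring

noncomputable def Erow {n : ℕ} (p : Fin n) : Fin n → ℂ := fun m => if m = p then 1 else 0
noncomputable def vrow {n : ℕ} (t : ℂ) : Fin n → ℂ := fun m => t^(m:ℕ)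
noncomputable def w1row {n : ℕ} (c d : ℂ) : Fin n → ℂ :=
  fun m => if (m:ℕ) = 0 then 1 else (c-d)*c^((m:ℕ)-1)
noncomputable def w2row {n : ℕ} (c : ℂ) : Fin n → ℂ :=
  fun m => if (m:ℕ) = 0 then 0 else c^((m:ℕ)-1)
noncomputable def r1row {n : ℕ} (t : ℂ) : Fin n → ℂ :=
  fun m => if (m:ℕ) = 0 then 1 else if (m:ℕ) = 1 then -t else 0
noncomputable def qrow {n : ℕ} (c d : ℂ) : Fin n → ℂ :=
  fun m => ∑ i ∈ Finset.range (m:ℕ), c^i * d^((m:ℕ)-1-i)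

lemma Erow_castSucc_zero {n : ℕ} (k : Fin n) :
    (Erow (0 : Fin (n+1))) k.castSucc = (if (k:ℕ) = 0 then 1 else 0) := by
  simp only [Erow]
  by_cases hk : (k:ℕ) = 0
  · rw [if_pos (by simp [Fin.ext_iff]; omega), if_pos hk]
  · rw [if_neg (by simp [Fin.ext_iff]; omega), if_neg hk]

lemma vU_vrow_self (n : ℕ) (t : ℂ) : vU t (vrow t) = (Erow 0 : Fin (n+1) → ℂ) := by
  funext m
  induction m using Fin.cases with
  | zero => rw [vU_zero]; simp [vrow, Erow]
  | succ k =>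
    rw [vU_succ]
    have h1 : (Erow (0:Fin (n+1))) k.succ = 0 := by
      simp [Erow, Fin.succ_ne_zero k]
    rw [h1]
    simp only [vrow, Fin.val_succ, Fin.coe_castSucc]
    rw [pow_succ]
    ring

lemma vU_Elast (n : ℕ) (t : ℂ) :
    vU t (Erow (Fin.last n)) = (Erow (Fin.last n) : Fin (n+1) → ℂ) := by
  funext m
  induction m using Fin.cases with
  | zero => rw [vU_zero]
  | succ k =>
    rw [vU_succ]
    have h2 : (Erow (Fin.last n)) k.castSucc = 0 := by
      rw [Erow, if_neg (by simp [Fin.ext_iff]; omega)]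
    rw [h2]
    ring

lemma vU_E0 (n : ℕ) (t : ℂ) : vU t (Erow 0) = (r1row t : Fin (n+1) → ℂ) := by
  funext m
  induction m using Fin.cases with
  | zero => rw [vU_zero]; simp [Erow, r1row]
  | succ k =>
    rw [vU_succ]
    have h1 : (Erow (0:Fin (n+1))) k.succ = 0 := by simp [Erow, Fin.succ_ne_zero k]
    rw [h1, Erow_castSucc_zero]
    simp only [r1row, Fin.val_succ]
    rw [if_neg (show ¬((k:ℕ)+1 = 0) by omega)]
    by_cases hk : (k:ℕ) = 0
    · rw [if_pos hk, if_pos (show (k:ℕ)+1 = 1 by omega)]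
      ring
    · rw [if_neg hk, if_neg (show ¬((k:ℕ)+1 = 1) by omega)]
      ring

lemma vU_vrow (n : ℕ) (c d : ℂ) : vU d (vrow c) = (w1row c d : Fin (n+1) → ℂ) := by
  funext m
  induction m using Fin.cases with
  | zero => rw [vU_zero]; simp [vrow, w1row]
  | succ k =>
    rw [vU_succ]
    simp only [vrow, w1row, Fin.val_succ, Fin.coe_castSucc]
    rw [if_neg (by omega), show (k:ℕ)+1-1 = (k:ℕ) from rfl, pow_succ]
    ring

lemma vU_w1row (n : ℕ) (c d : ℂ) : vU c (w1row c d) = (r1row d : Fin (n+1) → ℂ) := by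
  funext m
  induction m using Fin.cases with
  | zero => rw [vU_zero]; simp [w1row, r1row]
  | succ k =>
    rw [vU_succ]
    have hs : w1row c d k.succ = (c-d)*c^(k:ℕ) := by
      simp only [w1row, Fin.val_succ]
      rw [if_neg (by omega), show (k:ℕ)+1-1 = (k:ℕ) from rfl]
    have hr : r1row d k.succ = (if (k:ℕ) = 0 then -d else 0) := by
      simp only [r1row, Fin.val_succ]
      rw [if_neg (by omega)]
      by_cases hk : (k:ℕ) = 0
      · rw [if_pos (by omega), if_pos hk]
      · rw [if_neg (by omega), if_neg hk]
    rw [hs, hr]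
    simp only [w1row, Fin.coe_castSucc]
    by_cases hk : (k:ℕ) = 0
    · rw [if_pos hk, if_pos hk, hk]
      ring
    · rw [if_neg hk, if_neg hk]
      obtain ⟨j, hj⟩ := Nat.exists_eq_succ_of_ne_zero hk
      rw [hj, show j+1-1 = j from rfl, pow_succ]
      ring

lemma vU_qrow (n : ℕ) (c d : ℂ) : vU d (qrow c d) = (w2row c : Fin (n+1) → ℂ) := by
  funext m
  induction m using Fin.cases with
  | zero => rw [vU_zero]; simp [qrow, w2row]
  | succ k =>
    rw [vU_succ]
    have h1 : qrow c d k.succ = d * qrow c d k.castSucc + c^(k:ℕ) := by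
      simp only [qrow, Fin.val_succ, Fin.coe_castSucc, Nat.add_sub_cancel]
      rw [Finset.sum_range_succ, Nat.sub_self, pow_zero, mul_one]
      have hc : ∀ i ∈ Finset.range (k:ℕ), c^i * d^((k:ℕ)-i)
          = d * (c^i * d^((k:ℕ)-1-i)) := by
        intro i hi
        simp only [Finset.mem_range] at hi
        rw [show (k:ℕ)-i = ((k:ℕ)-1-i)+1 by omega, pow_succ]
        ring
      rw [Finset.sum_congr rfl hc, ← Finset.mul_sum]
    have h2 : w2row c k.succ = c^(k:ℕ) := by
      simp only [w2row, Fin.val_succ]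
      rw [if_neg (by omega), show (k:ℕ)+1-1 = (k:ℕ) from rfl]
    rw [h1, h2]
    ring

lemma vU_w2row (n : ℕ) (c : ℂ) :
    vU (n := n+1) c (w2row c) = (Erow ⟨1, by omega⟩ : Fin (n+2) → ℂ) := by
  funext m
  induction m using Fin.cases with
  | zero =>
    rw [vU_zero]
    rw [Erow, if_neg (by simp [Fin.ext_iff])]
    simp [w2row]
  | succ k =>
    rw [vU_succ]
    have hr : (Erow (⟨1, by omega⟩ : Fin (n+2))) k.succ
        = (if (k:ℕ) = 0 then 1 else 0) := by
      simp only [Erow, Fin.ext_iff, Fin.val_succ]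
      by_cases hk : (k:ℕ) = 0
      · rw [if_pos (by omega), if_pos hk]
      · rw [if_neg (by omega), if_neg hk]
    rw [hr]
    simp only [w2row, Fin.val_succ, Fin.coe_castSucc]
    rw [if_neg (by omega), show (k:ℕ)+1-1 = (k:ℕ) from rfl]
    by_cases hk : (k:ℕ) = 0
    · rw [if_pos hk, if_pos hk, hk]
      ring
    · rw [if_neg hk, if_neg hk]
      obtain ⟨j, hj⟩ := Nat.exists_eq_succ_of_ne_zero hk
      rw [hj, show j+1-1 = j from rfl, pow_succ]
      ring

lemma vrow_sub (n : ℕ) (c d : ℂ) (m : Fin n) :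
    vrow d m = vrow c m + (d - c) * qrow c d m := by
  have h := geom_sum₂_mul c d (m:ℕ)
  simp only [vrow, qrow]
  linear_combination h

lemma of_snoc_updateRow_y {N : ℕ} (rows : Fin N → Fin (N+2) → ℂ) (x y₀ y : Fin (N+2) → ℂ) :
    (Matrix.of (Fin.snoc (Fin.snoc rows x) y₀)).updateRow (Fin.last (N+1)) y
      = Matrix.of (Fin.snoc (Fin.snoc rows x) y) := by
  funext i j
  induction i using Fin.lastCases with
  | last => rw [Matrix.updateRow_self]; simp only [Matrix.of_apply, Fin.snoc_last]
  | cast a =>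
    rw [Matrix.updateRow_ne (by simp [Fin.ext_iff]; omega)]
    simp only [Matrix.of_apply, Fin.snoc_castSucc]

lemma of_snoc_updateRow_x {N : ℕ} (rows : Fin N → Fin (N+2) → ℂ) (x₀ x y : Fin (N+2) → ℂ) :
    (Matrix.of (Fin.snoc (Fin.snoc rows x₀) y)).updateRow (ii0 N) x
      = Matrix.of (Fin.snoc (Fin.snoc rows x) y) := by
  funext i j
  induction i using Fin.lastCases with
  | last =>
    rw [Matrix.updateRow_ne (by simp [ii0, Fin.ext_iff])]
    simp only [Matrix.of_apply, Fin.snoc_last]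
  | cast a =>
    induction a using Fin.lastCases with
    | last =>
      rw [show (Fin.last N).castSucc = ii0 N from rfl, Matrix.updateRow_self]
      simp only [Matrix.of_apply, ii0, Fin.snoc_castSucc, Fin.snoc_last]
    | cast b =>
      rw [Matrix.updateRow_ne (by simp [ii0, Fin.ext_iff]; omega)]
      simp only [Matrix.of_apply, Fin.snoc_castSucc]

lemma DD_add_y {N : ℕ} (rows : Fin N → Fin (N+2) → ℂ) (x u v : Fin (N+2) → ℂ) :
    DD rows x (fun m => u m + v m) = DD rows x u + DD rows x v := by
  have h := Matrix.det_updateRow_add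
    (Matrix.of (Fin.snoc (Fin.snoc rows x) u)) (Fin.last (N+1)) u v
  rw [of_snoc_updateRow_y, of_snoc_updateRow_y, of_snoc_updateRow_y] at h
  exact h

lemma DD_smul_y {N : ℕ} (rows : Fin N → Fin (N+2) → ℂ) (x u : Fin (N+2) → ℂ) (s : ℂ) :
    DD rows x (fun m => s * u m) = s * DD rows x u := by
  have h := Matrix.det_updateRow_smul
    (Matrix.of (Fin.snoc (Fin.snoc rows x) u)) (Fin.last (N+1)) s u
  rw [show (s • u) = fun m => s * u m from rfl] at h
  rw [of_snoc_updateRow_y, of_snoc_updateRow_y] at h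
  exact h

lemma DD_add_x {N : ℕ} (rows : Fin N → Fin (N+2) → ℂ) (u v y : Fin (N+2) → ℂ) :
    DD rows (fun m => u m + v m) y = DD rows u y + DD rows v y := by
  have h := Matrix.det_updateRow_add
    (Matrix.of (Fin.snoc (Fin.snoc rows u) y)) (ii0 N) u v
  rw [of_snoc_updateRow_x, of_snoc_updateRow_x, of_snoc_updateRow_x] at h
  exact h

lemma DD_smul_x {N : ℕ} (rows : Fin N → Fin (N+2) → ℂ) (u y : Fin (N+2) → ℂ) (s : ℂ) :
    DD rows (fun m => s * u m) y = s * DD rows u y := by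
  have h := Matrix.det_updateRow_smul
    (Matrix.of (Fin.snoc (Fin.snoc rows u) y)) (ii0 N) s u
  rw [show (s • u) = fun m => s * u m from rfl] at h
  rw [of_snoc_updateRow_x, of_snoc_updateRow_x] at h
  exact h

lemma DD_dup {N : ℕ} (rows : Fin N → Fin (N+2) → ℂ) (v : Fin (N+2) → ℂ) :
    DD rows v v = 0 := by
  apply Matrix.det_zero_of_row_eq (i := ii0 N) (j := Fin.last (N+1))
  · simp [ii0, Fin.ext_iff]
  · funext m
    simp only [Matrix.of_apply, ii0, Fin.snoc_castSucc, Fin.snoc_last]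

lemma snoc_mul_U {N : ℕ} (rows : Fin N → Fin (N+2) → ℂ) (x y : Fin (N+2) → ℂ) (t : ℂ) :
    (Matrix.of (Fin.snoc (Fin.snoc rows x) y) : Matrix (Fin (N+2)) (Fin (N+2)) ℂ)
        * Umat (N+1) t
      = Matrix.of (Fin.snoc (Fin.snoc (fun j => vU t (rows j)) (vU t x)) (vU t y)) := by
  ext i j
  rw [Matrix.mul_apply]
  induction i using Fin.lastCases with
  | last =>
    simp only [Matrix.of_apply, Fin.snoc_last]
    rfl
  | cast a =>
    induction a using Fin.lastCases with
    | last =>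
      simp only [Matrix.of_apply, Fin.snoc_castSucc, Fin.snoc_last]
      rfl
    | cast b =>
      simp only [Matrix.of_apply, Fin.snoc_castSucc]
      rfl

lemma DD_colop {N : ℕ} (rows : Fin N → Fin (N+2) → ℂ) (x y : Fin (N+2) → ℂ) (t : ℂ) :
    DD rows x y = DD (fun j => vU t (rows j)) (vU t x) (vU t y) := by
  rw [DD, DD, ← snoc_mul_U, Matrix.det_mul, det_Umat, mul_one]

lemma E0exp {N : ℕ} (G : Fin N → Fin (N+2) → ℂ) (p' : Fin (N+2)) :
    (Matrix.of (Fin.snoc (Fin.snoc G (Erow (p'.succAbove 0))) (Erow p'))).det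
      = (-1:ℂ)^((p':ℕ)+1)
        * (Matrix.of (fun (j a : Fin N) => G j (p'.succAbove a.succ))).det := by
  rw [Matrix.det_succ_row _ (Fin.last (N+1))]
  rw [Finset.sum_eq_single p']
  · have hentry : (Matrix.of (Fin.snoc (Fin.snoc G (Erow (p'.succAbove 0))) (Erow p')))
        (Fin.last (N+1)) p' = 1 := by
      simp [Erow, Fin.snoc_last]
    rw [hentry, mul_one]
    have hsub : (Matrix.of (Fin.snoc (Fin.snoc G (Erow (p'.succAbove 0)))
        (Erow p'))).submatrix (Fin.last (N+1)).succAbove p'.succAbove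
        = Matrix.of (Fin.snoc (fun (j : Fin N) (b : Fin (N+1)) => G j (p'.succAbove b))
            (fun b => Erow (p'.succAbove 0) (p'.succAbove b))) := by
      ext a b
      simp only [Matrix.submatrix_apply, Matrix.of_apply, Fin.succAbove_last]
      induction a using Fin.lastCases with
      | last => simp only [Fin.snoc_castSucc, Fin.snoc_last]
      | cast a' => simp only [Fin.snoc_castSucc]
    rw [hsub, Matrix.det_succ_row _ (Fin.last N)]
    rw [Finset.sum_eq_single 0]
    · have hentry2 : (Matrix.of (Fin.snoc (fun (j : Fin N) (b : Fin (N+1)) =>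
          G j (p'.succAbove b)) (fun b => Erow (p'.succAbove 0) (p'.succAbove b))))
          (Fin.last N) 0 = 1 := by
        simp [Erow, Fin.snoc_last]
      rw [hentry2, mul_one]
      have hsub2 : (Matrix.of (Fin.snoc (fun (j : Fin N) (b : Fin (N+1)) =>
          G j (p'.succAbove b)) (fun b => Erow (p'.succAbove 0) (p'.succAbove b)))).submatrix
            (Fin.last N).succAbove (0 : Fin (N+1)).succAbove
          = Matrix.of (fun (j a : Fin N) => G j (p'.succAbove a.succ)) := by
        ext a b
        simp only [Matrix.submatrix_apply, Matrix.of_apply, Fin.succAbove_last,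
          Fin.succAbove_zero, Fin.snoc_castSucc]
      rw [hsub2]
      have hsign : (-1:ℂ)^(((Fin.last (N+1)):ℕ) + (p':ℕ))
          * (-1:ℂ)^(((Fin.last N):ℕ) + ((0 : Fin (N+1)):ℕ)) = (-1:ℂ)^((p':ℕ)+1) := by
        simp only [Fin.val_last, Fin.val_zero, Nat.add_zero]
        rw [← pow_add, show N+1+(p':ℕ)+N = 2*N + ((p':ℕ)+1) by ring, pow_add, pow_mul]
        norm_num
      rw [← mul_assoc, hsign]
    · intro j _ hj
      have : (Matrix.of (Fin.snoc (fun (j : Fin N) (b : Fin (N+1)) =>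
          G j (p'.succAbove b)) (fun b => Erow (p'.succAbove 0) (p'.succAbove b))))
          (Fin.last N) j = 0 := by
        simp only [Matrix.of_apply, Fin.snoc_last, Erow]
        rw [if_neg (fun hc => hj (Fin.succAbove_right_injective hc))]
      rw [this]
      ring
    · intro h
      exact absurd (Finset.mem_univ (0 : Fin (N+1))) h
  · intro j _ hj
    have : (Matrix.of (Fin.snoc (Fin.snoc G (Erow (p'.succAbove 0))) (Erow p')))
        (Fin.last (N+1)) j = 0 := by
      simp only [Matrix.of_apply, Fin.snoc_last, Erow]
      rw [if_neg hj]
    rw [this]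
    ring
  · intro h
    exact absurd (Finset.mem_univ p') h

lemma fin1 (N : ℕ) : (⟨1, by omega⟩ : Fin (N+2)) = (0 : Fin (N+2)).succAbove 0 := by
  rw [Fin.succAbove_zero]
  simp [Fin.ext_iff]

lemma fin1' (N : ℕ) (a : Fin N) :
    (⟨1, by omega⟩ : Fin (N+2)).succAbove a.succ = a.succ.succ := by
  rw [Fin.succAbove_of_le_castSucc]
  simp [Fin.le_def]

lemma fin1'' (N : ℕ) : (⟨1, by omega⟩ : Fin (N+2)).succAbove 0 = 0 := by
  rw [Fin.succAbove_of_castSucc_lt]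
  · simp
  · simp [Fin.lt_def]

lemma E0_last {N : ℕ} (G : Fin N → Fin (N+2) → ℂ) :
    DD G (Erow 0) (Erow (Fin.last (N+1)))
      = (-1:ℂ)^N * (Matrix.of (fun j a : Fin N => G j a.succ.castSucc)).det := by
  have h0 : (Erow (0 : Fin (N+2))) = Erow ((Fin.last (N+1)).succAbove 0) := by
    rw [Fin.succAbove_last, Fin.castSucc_zero]
  rw [DD, h0, E0exp]
  have hs : (-1:ℂ)^(((Fin.last (N+1)):ℕ)+1) = (-1:ℂ)^N := by
    rw [Fin.val_last, show N+1+1 = N+2 from rfl, pow_add]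
    norm_num
  have hm : (Matrix.of (fun j a : Fin N => G j ((Fin.last (N+1)).succAbove a.succ)))
      = Matrix.of (fun j a : Fin N => G j a.succ.castSucc) := by
    ext j a
    simp only [Matrix.of_apply, Fin.succAbove_last]
  rw [hs, hm]

lemma E0_zero {N : ℕ} (G : Fin N → Fin (N+2) → ℂ) :
    DD G (Erow ⟨1, by omega⟩) (Erow 0)
      = -(Matrix.of (fun j a : Fin N => G j a.succ.succ)).det := by
  have h0 : (Erow (⟨1, by omega⟩ : Fin (N+2))) = Erow ((0 : Fin (N+2)).succAbove 0) := by
    rw [← fin1]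
  rw [DD, h0, E0exp]
  have hm : (Matrix.of (fun j a : Fin N => G j ((0 : Fin (N+2)).succAbove a.succ)))
      = Matrix.of (fun j a : Fin N => G j a.succ.succ) := by
    ext j a
    simp only [Matrix.of_apply, Fin.succAbove_zero]
  rw [hm]
  norm_num

lemma E0_one {N : ℕ} (G : Fin N → Fin (N+2) → ℂ) :
    DD G (Erow 0) (Erow ⟨1, by omega⟩)
      = (Matrix.of (fun j a : Fin N => G j a.succ.succ)).det := by
  have h0 : (Erow (0 : Fin (N+2))) = Erow ((⟨1, by omega⟩ : Fin (N+2)).succAbove 0) := by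
    rw [fin1'']
  rw [DD, h0, E0exp]
  have hm : (Matrix.of (fun j a : Fin N => G j ((⟨1, by omega⟩ : Fin (N+2)).succAbove a.succ)))
      = Matrix.of (fun j a : Fin N => G j a.succ.succ) := by
    ext j a
    simp only [Matrix.of_apply, fin1']
  rw [hm, show ((⟨1, by omega⟩ : Fin (N+2)) : ℕ) = 1 from rfl]
  norm_num

lemma r1row_decomp (n : ℕ) (t : ℂ) :
    (r1row t : Fin (n+2) → ℂ)
      = fun m => Erow 0 m + (-t) * Erow (⟨1, by omega⟩ : Fin (n+2)) m := by
  funext m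
  simp only [r1row, Erow]
  by_cases h0 : (m:ℕ) = 0
  · rw [if_pos h0, if_pos (show m = 0 from Fin.ext (by simpa using h0)),
      if_neg (show m ≠ ⟨1, by omega⟩ from fun hc => by
        rw [Fin.ext_iff] at hc
        simp at hc
        omega)]
    ring
  · rw [if_neg h0, if_neg (show m ≠ 0 from fun hc => h0 (by simp [hc]))]
    by_cases h1 : (m:ℕ) = 1
    · rw [if_pos h1, if_pos (show m = ⟨1, by omega⟩ from Fin.ext (by simpa using h1))]
      ring
    · rw [if_neg h1, if_neg (show m ≠ ⟨1, by omega⟩ from fun hc => h1 (by rw [hc]))]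
      ring

lemma DD_r1 {N : ℕ} (G : Fin N → Fin (N+2) → ℂ) (t : ℂ) (y : Fin (N+2) → ℂ) :
    DD G (r1row t) y = DD G (Erow 0) y + (-t) * DD G (Erow ⟨1, by omega⟩) y := by
  rw [r1row_decomp, DD_add_x, DD_smul_x]

/-- The Casoratian (in direction `n1`) built from dKdV-type plane-wave entries
satisfies the discrete AKP (Hirota–Miwa) equation. -/
theorem stmt_12 (N : ℕ) (hN : 1 ≤ N) (a1 a2 a3 : ℂ) (k ρp ρm : Fin N → ℂ)
    (ha1 : ∀ j, a1 + k j ≠ 0) (ha1' : ∀ j, a1 - k j ≠ 0)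
    (ha2 : ∀ j, a2 + k j ≠ 0) (ha2' : ∀ j, a2 - k j ≠ 0)
    (ha3 : ∀ j, a3 + k j ≠ 0) (ha3' : ∀ j, a3 - k j ≠ 0)
    (ψ : Fin N → ℤ → ℤ → ℤ → ℂ)
    (hψ : ∀ j n1 n2 n3, ψ j n1 n2 n3 =
      ρp j * (a1 + k j) ^ n1 * (a2 + k j) ^ n2 * (a3 + k j) ^ n3 +
      ρm j * (a1 - k j) ^ n1 * (a2 - k j) ^ n2 * (a3 - k j) ^ n3)
    (τ : ℤ → ℤ → ℤ → ℂ)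
    (hτ : ∀ n1 n2 n3, τ n1 n2 n3 =
      (Matrix.of fun j m : Fin N => ψ j (n1 + (m.1 : ℤ)) n2 n3).det) :
    ∀ n1 n2 n3 : ℤ,
      (a1 - a2) * τ n1 n2 (n3 + 1) * τ (n1 + 1) (n2 + 1) n3 +
      (a2 - a3) * τ (n1 + 1) n2 n3 * τ n1 (n2 + 1) (n3 + 1) +
      (a3 - a1) * τ n1 (n2 + 1) n3 * τ (n1 + 1) n2 (n3 + 1) = 0 := by
  intro n1 n2 n3
  have S2 : ∀ (j : Fin N) (p q r : ℤ), ψ j p (q+1) r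
      = ψ j (p+1) q r - (a1-a2) * ψ j p q r := by
    intro j p q r
    rw [hψ, hψ, hψ, zpow_add_one₀ (ha2 j), zpow_add_one₀ (ha2' j),
        zpow_add_one₀ (ha1 j), zpow_add_one₀ (ha1' j)]
    ring
  have S3 : ∀ (j : Fin N) (p q r : ℤ), ψ j p q (r+1)
      = ψ j (p+1) q r - (a1-a3) * ψ j p q r := by
    intro j p q r
    rw [hψ, hψ, hψ, zpow_add_one₀ (ha3 j), zpow_add_one₀ (ha3' j),
        zpow_add_one₀ (ha1 j), zpow_add_one₀ (ha1' j)]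
    ring
  have S23 : ∀ (j : Fin N) (p q r : ℤ), ψ j p (q+1) (r+1)
      = ψ j (p+1+1) q r - ((a1-a2)+(a1-a3)) * ψ j (p+1) q r
        + (a1-a2)*(a1-a3) * ψ j p q r := by
    intro j p q r
    rw [S2 j p q (r+1), S3 j (p+1) q r, S3 j p q r]
    ring
  set rows : Fin N → Fin (N+2) → ℂ := fun j m => ψ j (n1 + ((m:ℕ):ℤ)) n2 n3 with hrows
  have EV1 : DD rows (Erow 0) (Erow (Fin.last (N+1))) = (-1:ℂ)^N * τ (n1+1) n2 n3 := by
    rw [E0_last, hτ (n1+1) n2 n3]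
    congr 2
    ext j a
    simp only [Matrix.of_apply, hrows]
    have hidx : n1 + (((a.succ.castSucc : Fin (N+2)) :ℕ):ℤ) = (n1+1) + ((a:ℕ):ℤ) := by
      simp only [Fin.coe_castSucc, Fin.val_succ]
      push_cast
      ring
    rw [hidx]
  have EV2 : DD rows (vrow (a1-a2)) (Erow (Fin.last (N+1)))
      = (-1:ℂ)^N * τ n1 (n2+1) n3 := by
    rw [DD_colop rows _ _ (a1-a2), vU_vrow_self, vU_Elast, E0_last, hτ n1 (n2+1) n3]
    congr 2
    ext j a
    simp only [Matrix.of_apply]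
    rw [← Fin.succ_castSucc, vU_succ]
    simp only [hrows]
    rw [S2 j (n1 + ((a:ℕ):ℤ)) n2 n3]
    have h1 : n1 + (((a.castSucc.succ : Fin (N+2)):ℕ):ℤ) = n1 + ((a:ℕ):ℤ) + 1 := by
      simp only [Fin.val_succ, Fin.coe_castSucc]
      push_cast
      ring
    have h2 : n1 + (((a.castSucc.castSucc : Fin (N+2)):ℕ):ℤ) = n1 + ((a:ℕ):ℤ) := by
      simp only [Fin.coe_castSucc]
    rw [h1, h2]
  have EV3 : DD rows (vrow (a1-a3)) (Erow (Fin.last (N+1)))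
      = (-1:ℂ)^N * τ n1 n2 (n3+1) := by
    rw [DD_colop rows _ _ (a1-a3), vU_vrow_self, vU_Elast, E0_last, hτ n1 n2 (n3+1)]
    congr 2
    ext j a
    simp only [Matrix.of_apply]
    rw [← Fin.succ_castSucc, vU_succ]
    simp only [hrows]
    rw [S3 j (n1 + ((a:ℕ):ℤ)) n2 n3]
    have h1 : n1 + (((a.castSucc.succ : Fin (N+2)):ℕ):ℤ) = n1 + ((a:ℕ):ℤ) + 1 := by
      simp only [Fin.val_succ, Fin.coe_castSucc]
      push_cast
      ring
    have h2 : n1 + (((a.castSucc.castSucc : Fin (N+2)):ℕ):ℤ) = n1 + ((a:ℕ):ℤ) := by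
      simp only [Fin.coe_castSucc]
    rw [h1, h2]
  have EV4 : DD rows (Erow 0) (vrow (a1-a2)) = (a1-a2) * τ (n1+1) (n2+1) n3 := by
    rw [DD_colop rows _ _ (a1-a2), vU_E0, vU_vrow_self, DD_r1, DD_dup, E0_zero,
      hτ (n1+1) (n2+1) n3]
    have hm : (Matrix.of (fun j a : Fin N => vU (a1-a2) (rows j) a.succ.succ))
        = Matrix.of (fun j m : Fin N => ψ j ((n1+1) + ((m:ℕ):ℤ)) (n2+1) n3) := by
      ext j a
      simp only [Matrix.of_apply]
      rw [vU_succ]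
      simp only [hrows]
      rw [S2 j (n1 + 1 + ((a:ℕ):ℤ)) n2 n3]
      have h1 : n1 + (((a.succ.succ : Fin (N+2)):ℕ):ℤ) = n1 + 1 + ((a:ℕ):ℤ) + 1 := by
        simp only [Fin.val_succ]
        push_cast
        ring
      have h2 : n1 + (((a.succ.castSucc : Fin (N+2)):ℕ):ℤ) = n1 + 1 + ((a:ℕ):ℤ) := by
        simp only [Fin.val_succ, Fin.coe_castSucc]
        push_cast
        ring
      rw [h1, h2]
    rw [hm]
    ring
  have EV5 : DD rows (Erow 0) (vrow (a1-a3)) = (a1-a3) * τ (n1+1) n2 (n3+1) := by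
    rw [DD_colop rows _ _ (a1-a3), vU_E0, vU_vrow_self, DD_r1, DD_dup, E0_zero,
      hτ (n1+1) n2 (n3+1)]
    have hm : (Matrix.of (fun j a : Fin N => vU (a1-a3) (rows j) a.succ.succ))
        = Matrix.of (fun j m : Fin N => ψ j ((n1+1) + ((m:ℕ):ℤ)) n2 (n3+1)) := by
      ext j a
      simp only [Matrix.of_apply]
      rw [vU_succ]
      simp only [hrows]
      rw [S3 j (n1 + 1 + ((a:ℕ):ℤ)) n2 n3]
      have h1 : n1 + (((a.succ.succ : Fin (N+2)):ℕ):ℤ) = n1 + 1 + ((a:ℕ):ℤ) + 1 := by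
        simp only [Fin.val_succ]
        push_cast
        ring
      have h2 : n1 + (((a.succ.castSucc : Fin (N+2)):ℕ):ℤ) = n1 + 1 + ((a:ℕ):ℤ) := by
        simp only [Fin.val_succ, Fin.coe_castSucc]
        push_cast
        ring
      rw [h1, h2]
    rw [hm]
    ring
  have EV6 : DD rows (vrow (a1-a2)) (vrow (a1-a3))
      = ((a1-a3)-(a1-a2)) * τ n1 (n2+1) (n3+1) := by
    have hv : (vrow (a1-a3) : Fin (N+2) → ℂ)
        = fun m => vrow (a1-a2) m
            + ((a1-a3)-(a1-a2)) * qrow (a1-a2) (a1-a3) m := by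
      funext m
      exact vrow_sub _ _ _ m
    rw [hv, DD_add_y, DD_dup, DD_smul_y, zero_add]
    rw [DD_colop rows _ _ (a1-a3), vU_vrow, vU_qrow]
    rw [DD_colop _ _ _ (a1-a2), vU_w1row, vU_w2row]
    rw [DD_r1, DD_dup, E0_one, hτ n1 (n2+1) (n3+1)]
    have hm : (Matrix.of (fun j a : Fin N =>
          vU (a1-a2) (vU (a1-a3) (rows j)) a.succ.succ))
        = Matrix.of (fun j m : Fin N => ψ j (n1 + ((m:ℕ):ℤ)) (n2+1) (n3+1)) := by
      ext j a
      simp only [Matrix.of_apply]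
      rw [vU_succ, ← Fin.succ_castSucc, vU_succ, vU_succ, ← Fin.succ_castSucc]
      simp only [hrows]
      rw [S23 j (n1 + ((a:ℕ):ℤ)) n2 n3]
      have h0 : n1 + (((a.succ.succ : Fin (N+2)):ℕ):ℤ) = n1 + ((a:ℕ):ℤ) + 1 + 1 := by
        simp only [Fin.val_succ]
        push_cast
        ring
      have h1 : n1 + (((a.castSucc.succ : Fin (N+2)):ℕ):ℤ) = n1 + ((a:ℕ):ℤ) + 1 := by
        simp only [Fin.val_succ, Fin.coe_castSucc]
        push_cast
        ring
      have h2 : n1 + (((a.castSucc.castSucc : Fin (N+2)):ℕ):ℤ) = n1 + ((a:ℕ):ℤ) := by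
        simp only [Fin.coe_castSucc]
      rw [h0, h1, h2]
      ring
    rw [hm]
    ring
  have hP := pluecker rows (Erow 0) (vrow (a1-a2)) (vrow (a1-a3)) (Erow (Fin.last (N+1)))
  rw [EV4, EV3, EV5, EV2, EV1, EV6] at hP
  have hne : ((-1:ℂ)^N) ≠ 0 := pow_ne_zero _ (by norm_num)
  have key : (-1:ℂ)^N * ((a1 - a2) * τ n1 n2 (n3 + 1) * τ (n1 + 1) (n2 + 1) n3 +
      (a2 - a3) * τ (n1 + 1) n2 n3 * τ n1 (n2 + 1) (n3 + 1) +
      (a3 - a1) * τ n1 (n2 + 1) n3 * τ (n1 + 1) n2 (n3 + 1)) = 0 := by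
    linear_combination hP
  rcases mul_eq_zero.mp key with h | h
  · exact absurd h hne
  · exact h
end

section
/- Let τ(n1,n2,n3,n4) be the Casoratian in the direction n1 of the vector ψ with entries ψ_j(n1,n2,n3,n4) = ρ_j^+ ∏_{i=1}^4 (a_i+k_j)^{n_i} + ρ_j^- ∏_{i=1}^4 (a_i−k_j)^{n_i}. Then τ satisfies the 4D discrete AKP equation at every point: (a2−a3)(a3−a4)(a2−a4) τ_1 τ_234 − (a1−a3)(a3−a4)(a1−a4) τ_2 τ_134 + (a1−a2)(a2−a4)(a1−a4) τ_3 τ_124 − (a1−a2)(a2−a3)(a1−a3) τ_4 τ_123 = 0. -/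
set_option maxHeartbeats 2000000

open Matrix

namespace AKPaux

variable {N : ℕ}

/-- Bordered determinant: rows of `Φ` followed by three extra rows. -/
def Dt (Φ : Fin N → Fin (N+3) → ℂ) (u v w : Fin (N+3) → ℂ) : ℂ :=
  (Matrix.of (Fin.append Φ ![u, v, w])).det

lemma upd (Φ : Fin N → Fin (N+3) → ℂ) (t : Fin 3 → Fin (N+3) → ℂ) (kk : Fin 3)
    (r : Fin (N+3) → ℂ) :
    Matrix.updateRow (Matrix.of (Fin.append Φ t)) (Fin.natAdd N kk) r
      = Matrix.of (Fin.append Φ (Function.update t kk r)) := by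
  ext i j
  refine Fin.addCases (fun i0 => ?_) (fun i0 => ?_) i
  · rw [Matrix.updateRow_ne]
    · simp [Fin.append_left]
    · intro h
      have := congrArg Fin.val h
      simp [Fin.ext_iff] at this
      omega
  · by_cases h : i0 = kk
    · subst h
      simp [Matrix.updateRow_self, Fin.append_right]
    · rw [Matrix.updateRow_ne]
      · simp [Fin.append_right, Function.update_of_ne h]
      · intro hc
        exact h (by
          have := congrArg Fin.val hc
          simp [Fin.ext_iff] at this
          exact Fin.ext this)

lemma upd0 (Φ : Fin N → Fin (N+3) → ℂ) (u v w r : Fin (N+3) → ℂ) :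
    Matrix.updateRow (Matrix.of (Fin.append Φ ![u, v, w])) (Fin.natAdd N 0) r
      = Matrix.of (Fin.append Φ ![r, v, w]) := by
  rw [upd, show Function.update ![u, v, w] (0:Fin 3) r = ![r, v, w] from by
    funext i; fin_cases i <;> simp]

lemma upd1 (Φ : Fin N → Fin (N+3) → ℂ) (u v w r : Fin (N+3) → ℂ) :
    Matrix.updateRow (Matrix.of (Fin.append Φ ![u, v, w])) (Fin.natAdd N 1) r
      = Matrix.of (Fin.append Φ ![u, r, w]) := by
  rw [upd, show Function.update ![u, v, w] (1:Fin 3) r = ![u, r, w] from by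
    funext i; fin_cases i <;> simp]

lemma upd2 (Φ : Fin N → Fin (N+3) → ℂ) (u v w r : Fin (N+3) → ℂ) :
    Matrix.updateRow (Matrix.of (Fin.append Φ ![u, v, w])) (Fin.natAdd N 2) r
      = Matrix.of (Fin.append Φ ![u, v, r]) := by
  rw [upd, show Function.update ![u, v, w] (2:Fin 3) r = ![u, v, r] from by
    funext i; fin_cases i <;> simp]

end AKPaux

namespace AKPaux
variable {N : ℕ}

variable (Φ : Fin N → Fin (N+3) → ℂ)

lemma Dt_add1 (u u' v w : Fin (N+3) → ℂ) :
    Dt Φ (u + u') v w = Dt Φ u v w + Dt Φ u' v w := by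
  unfold Dt
  rw [← upd0 Φ u v w (u + u'), Matrix.det_updateRow_add, upd0, upd0]

lemma Dt_add2 (u v v' w : Fin (N+3) → ℂ) :
    Dt Φ u (v + v') w = Dt Φ u v w + Dt Φ u v' w := by
  unfold Dt
  rw [← upd1 Φ u v w (v + v'), Matrix.det_updateRow_add, upd1, upd1]

lemma Dt_add3 (u v w w' : Fin (N+3) → ℂ) :
    Dt Φ u v (w + w') = Dt Φ u v w + Dt Φ u v w' := by
  unfold Dt
  rw [← upd2 Φ u v w (w + w'), Matrix.det_updateRow_add, upd2, upd2]

lemma Dt_smul1 (s : ℂ) (u v w : Fin (N+3) → ℂ) :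
    Dt Φ (s • u) v w = s * Dt Φ u v w := by
  unfold Dt
  rw [← upd0 Φ u v w (s • u), Matrix.det_updateRow_smul, upd0]

lemma Dt_smul2 (s : ℂ) (u v w : Fin (N+3) → ℂ) :
    Dt Φ u (s • v) w = s * Dt Φ u v w := by
  unfold Dt
  rw [← upd1 Φ u v w (s • v), Matrix.det_updateRow_smul, upd1]

lemma Dt_smul3 (s : ℂ) (u v w : Fin (N+3) → ℂ) :
    Dt Φ u v (s • w) = s * Dt Φ u v w := by
  unfold Dt
  rw [← upd2 Φ u v w (s • w), Matrix.det_updateRow_smul, upd2]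

lemma natAdd_ne (kk ll : Fin 3) (h : kk ≠ ll) : Fin.natAdd N kk ≠ Fin.natAdd N ll := by
  intro hc
  exact h (by
    have := congrArg Fin.val hc
    simp at this
    exact Fin.ext this)

lemma Dt_zero1 (v w : Fin (N+3) → ℂ) : Dt Φ 0 v w = 0 := by
  apply Matrix.det_eq_zero_of_row_eq_zero (Fin.natAdd N 0)
  intro j; simp [Fin.append_right]

lemma Dt_zero2 (u w : Fin (N+3) → ℂ) : Dt Φ u 0 w = 0 := by
  apply Matrix.det_eq_zero_of_row_eq_zero (Fin.natAdd N 1)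
  intro j; rw [Matrix.of_apply, Fin.append_right]; simp

lemma Dt_zero3 (u v : Fin (N+3) → ℂ) : Dt Φ u v 0 = 0 := by
  apply Matrix.det_eq_zero_of_row_eq_zero (Fin.natAdd N 2)
  intro j; rw [Matrix.of_apply, Fin.append_right]; simp

lemma castAdd_ne_natAdd (i : Fin N) (kk : Fin 3) : Fin.castAdd 3 i ≠ Fin.natAdd N kk := by
  intro hc
  have := congrArg Fin.val hc
  simp at this
  omega

lemma row_castAdd (t : Fin 3 → Fin (N+3) → ℂ) (i : Fin N) :
    (Matrix.of (Fin.append Φ t)) (Fin.castAdd 3 i) = Φ i :=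
  Fin.append_left _ _ _

lemma row_natAdd (t : Fin 3 → Fin (N+3) → ℂ) (kk : Fin 3) :
    (Matrix.of (Fin.append Φ t)) (Fin.natAdd N kk) = t kk :=
  Fin.append_right _ _ _

lemma Dt_row1 (u v w : Fin (N+3) → ℂ) (i : Fin N) (h : u = Φ i) : Dt Φ u v w = 0 := by
  apply Matrix.det_zero_of_row_eq (castAdd_ne_natAdd i 0)
  rw [row_castAdd, row_natAdd, h]; rfl

lemma Dt_row2 (u v w : Fin (N+3) → ℂ) (i : Fin N) (h : v = Φ i) : Dt Φ u v w = 0 := by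
  apply Matrix.det_zero_of_row_eq (castAdd_ne_natAdd i 1)
  rw [row_castAdd, row_natAdd, h]; rfl

lemma Dt_row3 (u v w : Fin (N+3) → ℂ) (i : Fin N) (h : w = Φ i) : Dt Φ u v w = 0 := by
  apply Matrix.det_zero_of_row_eq (castAdd_ne_natAdd i 2)
  rw [row_castAdd, row_natAdd, h]; rfl

lemma Dt_eq12 (u w : Fin (N+3) → ℂ) : Dt Φ u u w = 0 := by
  apply Matrix.det_zero_of_row_eq (natAdd_ne 0 1 (by decide))
  rw [row_natAdd, row_natAdd]; rfl

lemma Dt_eq13 (u v : Fin (N+3) → ℂ) : Dt Φ u v u = 0 := by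
  apply Matrix.det_zero_of_row_eq (natAdd_ne 0 2 (by decide))
  rw [row_natAdd, row_natAdd]; rfl

lemma Dt_eq23 (u v : Fin (N+3) → ℂ) : Dt Φ u v v = 0 := by
  apply Matrix.det_zero_of_row_eq (natAdd_ne 1 2 (by decide))
  rw [row_natAdd, row_natAdd]; rfl

lemma comp_swap (t : Fin 3 → Fin (N+3) → ℂ) (kk ll : Fin 3) (h : kk ≠ ll) :
    (Fin.append Φ t) ∘ Equiv.swap (Fin.natAdd N kk) (Fin.natAdd N ll)
      = Fin.append Φ (t ∘ Equiv.swap kk ll) := by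
  funext i
  refine Fin.addCases (fun i0 => ?_) (fun i0 => ?_) i
  · simp only [Function.comp_apply]
    rw [Equiv.swap_apply_of_ne_of_ne (castAdd_ne_natAdd i0 kk) (castAdd_ne_natAdd i0 ll)]
    rw [Fin.append_left, Fin.append_left]
  · simp only [Function.comp_apply, Fin.append_right]
    by_cases h1 : i0 = kk
    · subst h1
      rw [Equiv.swap_apply_left, Fin.append_right, Equiv.swap_apply_left]
    · by_cases h2 : i0 = ll
      · subst h2
        rw [Equiv.swap_apply_right, Fin.append_right, Equiv.swap_apply_right]
      · rw [Equiv.swap_apply_of_ne_of_ne (natAdd_ne _ _ h1) (natAdd_ne _ _ h2),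
          Fin.append_right, Equiv.swap_apply_of_ne_of_ne h1 h2]

lemma Dt_swap12 (u v w : Fin (N+3) → ℂ) : Dt Φ v u w = - Dt Φ u v w := by
  have h := Matrix.detRowAlternating.map_swap (Fin.append Φ ![u, v, w])
    (natAdd_ne (N := N) 0 1 (by decide))
  rw [comp_swap _ _ _ _ (by decide)] at h
  have ht : (![u, v, w] ∘ Equiv.swap (0:Fin 3) 1) = ![v, u, w] := by
    funext i; fin_cases i <;> simp [Equiv.swap_apply_def]
  rw [ht] at h
  exact h

lemma Dt_swap23 (u v w : Fin (N+3) → ℂ) : Dt Φ u w v = - Dt Φ u v w := by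
  have h := Matrix.detRowAlternating.map_swap (Fin.append Φ ![u, v, w])
    (natAdd_ne (N := N) 1 2 (by decide))
  rw [comp_swap _ _ _ _ (by decide)] at h
  have ht : (![u, v, w] ∘ Equiv.swap (1:Fin 3) 2) = ![u, w, v] := by
    funext i; fin_cases i <;> simp [Equiv.swap_apply_def]
  rw [ht] at h
  exact h

lemma Dt_swap13 (u v w : Fin (N+3) → ℂ) : Dt Φ w v u = - Dt Φ u v w := by
  have h := Matrix.detRowAlternating.map_swap (Fin.append Φ ![u, v, w])
    (natAdd_ne (N := N) 0 2 (by decide))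
  rw [comp_swap _ _ _ _ (by decide)] at h
  have ht : (![u, v, w] ∘ Equiv.swap (0:Fin 3) 2) = ![w, v, u] := by
    funext i; fin_cases i <;> simp [Equiv.swap_apply_def]
  rw [ht] at h
  exact h

end AKPaux

namespace AKPaux
variable {N : ℕ}

/-- The quadratic expression in the exchange (Plücker) relation. -/
def Gq (Φ : Fin N → Fin (N+3) → ℂ) (E F x y z t : Fin (N+3) → ℂ) : ℂ :=
  Dt Φ x E F * Dt Φ y z t - Dt Φ y E F * Dt Φ x z t
    + Dt Φ z E F * Dt Φ x y t - Dt Φ t E F * Dt Φ x y z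

variable (Φ : Fin N → Fin (N+3) → ℂ) (E F : Fin (N+3) → ℂ)

lemma Gq_add1 (x x' y z t : Fin (N+3) → ℂ) :
    Gq Φ E F (x + x') y z t = Gq Φ E F x y z t + Gq Φ E F x' y z t := by
  unfold Gq; simp only [Dt_add1]; ring

lemma Gq_add2 (x y y' z t : Fin (N+3) → ℂ) :
    Gq Φ E F x (y + y') z t = Gq Φ E F x y z t + Gq Φ E F x y' z t := by
  unfold Gq; simp only [Dt_add1, Dt_add2]; ring

lemma Gq_add3 (x y z z' t : Fin (N+3) → ℂ) :
    Gq Φ E F x y (z + z') t = Gq Φ E F x y z t + Gq Φ E F x y z' t := by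
  unfold Gq; simp only [Dt_add1, Dt_add2, Dt_add3]; ring

lemma Gq_add4 (x y z t t' : Fin (N+3) → ℂ) :
    Gq Φ E F x y z (t + t') = Gq Φ E F x y z t + Gq Φ E F x y z t' := by
  unfold Gq; simp only [Dt_add1, Dt_add2, Dt_add3]; ring

lemma Gq_smul1 (s : ℂ) (x y z t : Fin (N+3) → ℂ) :
    Gq Φ E F (s • x) y z t = s * Gq Φ E F x y z t := by
  unfold Gq; simp only [Dt_smul1]; ring

lemma Gq_smul2 (s : ℂ) (x y z t : Fin (N+3) → ℂ) :
    Gq Φ E F x (s • y) z t = s * Gq Φ E F x y z t := by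
  unfold Gq; simp only [Dt_smul1, Dt_smul2]; ring

lemma Gq_smul3 (s : ℂ) (x y z t : Fin (N+3) → ℂ) :
    Gq Φ E F x y (s • z) t = s * Gq Φ E F x y z t := by
  unfold Gq; simp only [Dt_smul1, Dt_smul2, Dt_smul3]; ring

lemma Gq_smul4 (s : ℂ) (x y z t : Fin (N+3) → ℂ) :
    Gq Φ E F x y z (s • t) = s * Gq Φ E F x y z t := by
  unfold Gq; simp only [Dt_smul1, Dt_smul2, Dt_smul3]; ring

lemma Gq_zero1 (y z t : Fin (N+3) → ℂ) : Gq Φ E F 0 y z t = 0 := by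
  unfold Gq; simp only [Dt_zero1]; ring

lemma Gq_zero2 (x z t : Fin (N+3) → ℂ) : Gq Φ E F x 0 z t = 0 := by
  unfold Gq; simp only [Dt_zero1, Dt_zero2]; ring

lemma Gq_zero3 (x y t : Fin (N+3) → ℂ) : Gq Φ E F x y 0 t = 0 := by
  unfold Gq; simp only [Dt_zero1, Dt_zero2, Dt_zero3]; ring

lemma Gq_zero4 (x y z : Fin (N+3) → ℂ) : Gq Φ E F x y z 0 = 0 := by
  unfold Gq; simp only [Dt_zero1, Dt_zero2, Dt_zero3]; ring

lemma Gq_row1 (x y z t : Fin (N+3) → ℂ) (i : Fin N) (h : x = Φ i) :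
    Gq Φ E F x y z t = 0 := by
  unfold Gq
  rw [Dt_row1 Φ x E F i h, Dt_row1 Φ x z t i h, Dt_row1 Φ x y t i h,
    Dt_row1 Φ x y z i h]; ring

lemma Gq_row2 (x y z t : Fin (N+3) → ℂ) (i : Fin N) (h : y = Φ i) :
    Gq Φ E F x y z t = 0 := by
  unfold Gq
  rw [Dt_row1 Φ y E F i h, Dt_row1 Φ y z t i h, Dt_row2 Φ x y t i h,
    Dt_row2 Φ x y z i h]; ring

lemma Gq_row3 (x y z t : Fin (N+3) → ℂ) (i : Fin N) (h : z = Φ i) :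
    Gq Φ E F x y z t = 0 := by
  unfold Gq
  rw [Dt_row1 Φ z E F i h, Dt_row2 Φ y z t i h, Dt_row2 Φ x z t i h,
    Dt_row3 Φ x y z i h]; ring

lemma Gq_row4 (x y z t : Fin (N+3) → ℂ) (i : Fin N) (h : t = Φ i) :
    Gq Φ E F x y z t = 0 := by
  unfold Gq
  rw [Dt_row1 Φ t E F i h, Dt_row3 Φ y z t i h, Dt_row3 Φ x z t i h,
    Dt_row3 Φ x y t i h]; ring

lemma Gq_eq12 (x z t : Fin (N+3) → ℂ) : Gq Φ E F x x z t = 0 := by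
  unfold Gq; rw [Dt_eq12 Φ x t, Dt_eq12 Φ x z]; ring

lemma Gq_eq13 (x y t : Fin (N+3) → ℂ) : Gq Φ E F x y x t = 0 := by
  unfold Gq
  rw [Dt_eq12 Φ x t, Dt_eq13 Φ x y, Dt_swap12 Φ x y t]; ring

lemma Gq_eq14 (x y z : Fin (N+3) → ℂ) : Gq Φ E F x y z x = 0 := by
  unfold Gq
  rw [Dt_eq13 Φ x z, Dt_eq13 Φ x y, Dt_swap13 Φ x z y, Dt_swap23 Φ x y z]
  ring

lemma Gq_eq23 (x y t : Fin (N+3) → ℂ) : Gq Φ E F x y y t = 0 := by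
  unfold Gq; rw [Dt_eq12 Φ y t, Dt_eq23 Φ x y]; ring

lemma Gq_eq24 (x y z : Fin (N+3) → ℂ) : Gq Φ E F x y z y = 0 := by
  unfold Gq
  rw [Dt_eq13 Φ y z, Dt_eq23 Φ x y, Dt_swap23 Φ x y z]; ring

lemma Gq_eq34 (x y z : Fin (N+3) → ℂ) : Gq Φ E F x y z z = 0 := by
  unfold Gq; rw [Dt_eq23 Φ y z, Dt_eq23 Φ x z]; ring

lemma exchange (a b c d : Fin (N+3) → ℂ) : Gq Φ E F a b c d = 0 := by
  by_cases hLI : LinearIndependent ℂ Φ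
  · -- independent case: span + complement of dimension 3
    have hex : ∃ wv : Fin 3 → (Fin (N+3) → ℂ),
        Submodule.span ℂ (Set.range Φ ∪ Set.range wv) = ⊤ := by
      obtain ⟨W, hW⟩ := Submodule.exists_isCompl (Submodule.span ℂ (Set.range Φ))
      have hfr : Module.finrank ℂ W = 3 := by
        have h1 := Submodule.finrank_add_eq_of_isCompl hW
        have h2 : Module.finrank ℂ (Submodule.span ℂ (Set.range Φ)) = N :=
          (finrank_span_eq_card hLI).trans (by simp)
        have h3 : Module.finrank ℂ (Fin (N+3) → ℂ) = N + 3 := by simp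
        omega
      let bW := (Module.finBasis ℂ W).reindex (finCongr hfr)
      refine ⟨fun i => (bW i : Fin (N+3) → ℂ), ?_⟩
      rw [Submodule.span_union]
      have hrw : Set.range (fun i => (bW i : Fin (N+3) → ℂ))
          = W.subtype '' Set.range bW := by
        ext v; simp [Set.range_comp]
      rw [hrw, Submodule.span_image, Module.Basis.span_eq, Submodule.map_top,
        Submodule.range_subtype]
      exact hW.sup_eq_top
    obtain ⟨wv, hspan⟩ := hex
    have pigeon : ∀ i1 i2 i3 i4 : Fin 3,
        i1 = i2 ∨ i1 = i3 ∨ i1 = i4 ∨ i2 = i3 ∨ i2 = i4 ∨ i3 = i4 := by decide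
    have hbase : ∀ x ∈ Set.range Φ ∪ Set.range wv, ∀ y ∈ Set.range Φ ∪ Set.range wv,
        ∀ z ∈ Set.range Φ ∪ Set.range wv, ∀ t ∈ Set.range Φ ∪ Set.range wv, Gq Φ E F x y z t = 0 := by
      intro x hx y hy z hz t ht
      rcases hx with ⟨i, rfl⟩ | hx
      · exact Gq_row1 Φ E F _ _ _ _ i rfl
      rcases hy with ⟨i, rfl⟩ | hy
      · exact Gq_row2 Φ E F _ _ _ _ i rfl
      rcases hz with ⟨i, rfl⟩ | hz
      · exact Gq_row3 Φ E F _ _ _ _ i rfl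
      rcases ht with ⟨i, rfl⟩ | ht
      · exact Gq_row4 Φ E F _ _ _ _ i rfl
      obtain ⟨i1, rfl⟩ := hx
      obtain ⟨i2, rfl⟩ := hy
      obtain ⟨i3, rfl⟩ := hz
      obtain ⟨i4, rfl⟩ := ht
      rcases pigeon i1 i2 i3 i4 with h | h | h | h | h | h
      · rw [h]; exact Gq_eq12 Φ E F _ _ _
      · rw [h]; exact Gq_eq13 Φ E F _ _ _
      · rw [h]; exact Gq_eq14 Φ E F _ _ _
      · rw [h]; exact Gq_eq23 Φ E F _ _ _
      · rw [h]; exact Gq_eq24 Φ E F _ _ _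
      · rw [h]; exact Gq_eq34 Φ E F _ _ _
    have H4 : ∀ x ∈ Set.range Φ ∪ Set.range wv, ∀ y ∈ Set.range Φ ∪ Set.range wv,
        ∀ z ∈ Set.range Φ ∪ Set.range wv, ∀ t ∈ Submodule.span ℂ (Set.range Φ ∪ Set.range wv),
        Gq Φ E F x y z t = 0 := by
      intro x hx y hy z hz t htt
      refine Submodule.span_induction (p := fun t _ => Gq Φ E F x y z t = 0)
        (fun t' ht' => hbase x hx y hy z hz t' ht') (Gq_zero4 Φ E F x y z)
        (fun u v _ _ hu hv => by
          show Gq Φ E F x y z (u + v) = 0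
          rw [Gq_add4, show Gq Φ E F x y z u = 0 from hu,
            show Gq Φ E F x y z v = 0 from hv, add_zero])
        (fun s u _ hu => by
          show Gq Φ E F x y z (s • u) = 0
          rw [Gq_smul4, show Gq Φ E F x y z u = 0 from hu, mul_zero]) htt
    have H3 : ∀ x ∈ Set.range Φ ∪ Set.range wv, ∀ y ∈ Set.range Φ ∪ Set.range wv,
        ∀ z ∈ Submodule.span ℂ (Set.range Φ ∪ Set.range wv), ∀ t ∈ Submodule.span ℂ (Set.range Φ ∪ Set.range wv),
        Gq Φ E F x y z t = 0 := by
      intro x hx y hy z hzz t htt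
      refine Submodule.span_induction (p := fun z _ => Gq Φ E F x y z t = 0)
        (fun z' hz' => H4 x hx y hy z' hz' t htt) (Gq_zero3 Φ E F x y t)
        (fun u v _ _ hu hv => by
          show Gq Φ E F x y (u + v) t = 0
          rw [Gq_add3, show Gq Φ E F x y u t = 0 from hu,
            show Gq Φ E F x y v t = 0 from hv, add_zero])
        (fun s u _ hu => by
          show Gq Φ E F x y (s • u) t = 0
          rw [Gq_smul3, show Gq Φ E F x y u t = 0 from hu, mul_zero]) hzz
    have H2 : ∀ x ∈ Set.range Φ ∪ Set.range wv, ∀ y ∈ Submodule.span ℂ (Set.range Φ ∪ Set.range wv),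
        ∀ z ∈ Submodule.span ℂ (Set.range Φ ∪ Set.range wv), ∀ t ∈ Submodule.span ℂ (Set.range Φ ∪ Set.range wv), Gq Φ E F x y z t = 0 := by
      intro x hx y hyy z hzz t htt
      refine Submodule.span_induction (p := fun y _ => Gq Φ E F x y z t = 0)
        (fun y' hy' => H3 x hx y' hy' z hzz t htt) (Gq_zero2 Φ E F x z t)
        (fun u v _ _ hu hv => by
          show Gq Φ E F x (u + v) z t = 0
          rw [Gq_add2, show Gq Φ E F x u z t = 0 from hu,
            show Gq Φ E F x v z t = 0 from hv, add_zero])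
        (fun s u _ hu => by
          show Gq Φ E F x (s • u) z t = 0
          rw [Gq_smul2, show Gq Φ E F x u z t = 0 from hu, mul_zero]) hyy
    have H1 : ∀ x ∈ Submodule.span ℂ (Set.range Φ ∪ Set.range wv), ∀ y ∈ Submodule.span ℂ (Set.range Φ ∪ Set.range wv),
        ∀ z ∈ Submodule.span ℂ (Set.range Φ ∪ Set.range wv), ∀ t ∈ Submodule.span ℂ (Set.range Φ ∪ Set.range wv), Gq Φ E F x y z t = 0 := by
      intro x hxx y hyy z hzz t htt
      refine Submodule.span_induction (p := fun x _ => Gq Φ E F x y z t = 0)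
        (fun x' hx' => H2 x' hx' y hyy z hzz t htt) (Gq_zero1 Φ E F y z t)
        (fun u v _ _ hu hv => by
          show Gq Φ E F (u + v) y z t = 0
          rw [Gq_add1, show Gq Φ E F u y z t = 0 from hu,
            show Gq Φ E F v y z t = 0 from hv, add_zero])
        (fun s u _ hu => by
          show Gq Φ E F (s • u) y z t = 0
          rw [Gq_smul1, show Gq Φ E F u y z t = 0 from hu, mul_zero]) hxx
    have hmem : ∀ v : Fin (N+3) → ℂ, v ∈ Submodule.span ℂ (Set.range Φ ∪ Set.range wv) := by
      intro v; rw [hspan]; trivial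
    exact H1 a (hmem a) b (hmem b) c (hmem c) d (hmem d)
  · -- dependent case: every determinant vanishes
    have hz : ∀ u v w : Fin (N+3) → ℂ, Dt Φ u v w = 0 := by
      intro u v w
      have hdep : ¬ LinearIndependent ℂ (Fin.append Φ ![u, v, w]) := by
        intro hLI2
        apply hLI
        have := hLI2.comp (Fin.castAdd 3) (Fin.castAdd_injective _ _)
        have he : (Fin.append Φ ![u, v, w]) ∘ (Fin.castAdd 3) = Φ := by
          funext i; exact Fin.append_left _ _ _
        rwa [he] at this
      show (Matrix.detRowAlternating (Matrix.of (Fin.append Φ ![u, v, w])) : ℂ) = 0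
      exact AlternatingMap.map_linearDependent _ _ hdep
    unfold Gq; simp [hz]

end AKPaux

/-- Reduction of a determinant with geometric last row via column operations. -/
lemma red {n : ℕ} (M : Matrix (Fin (n+1)) (Fin (n+1)) ℂ) (x : ℂ)
    (h : ∀ p, M (Fin.last n) p = x ^ (p : ℕ)) :
    M.det = (-1 : ℂ)^n * (Matrix.of fun (j m : Fin n) =>
      M j.castSucc m.succ - x * M j.castSucc m.castSucc).det := by
  set K : Matrix (Fin (n+1)) (Fin (n+1)) ℂ := Matrix.of fun q p =>
    (if q = p then (1:ℂ) else 0) + (if (q:ℕ)+1 = (p:ℕ) then -x else 0) with hKdef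
  have hK : K.det = 1 := by
    have hut : K.BlockTriangular id := by
      intro q p hpq
      show (if q = p then (1:ℂ) else 0) + (if (q:ℕ)+1 = (p:ℕ) then -x else 0) = 0
      have h1 : q ≠ p := by intro hc; subst hc; exact lt_irrefl _ hpq
      have h2 : ¬ ((q:ℕ)+1 = (p:ℕ)) := by
        have : (p:ℕ) < (q:ℕ) := hpq
        omega
      rw [if_neg h1, if_neg h2]; ring
    rw [Matrix.det_of_upperTriangular hut]
    apply Finset.prod_eq_one
    intro q _
    show (if q = q then (1:ℂ) else 0) + (if (q:ℕ)+1 = (q:ℕ) then -x else 0) = 1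
    rw [if_pos rfl, if_neg (by omega)]; ring
  have expand : ∀ (i : Fin (n+1)) (p q : Fin (n+1)), M i q * K q p
      = (if q = p then M i q else 0) + (if (q:ℕ)+1 = (p:ℕ) then -x * M i q else 0) := by
    intro i p q
    show M i q * ((if q = p then (1:ℂ) else 0) + (if (q:ℕ)+1 = (p:ℕ) then -x else 0)) = _
    by_cases h1 : q = p <;> by_cases h2 : (q:ℕ)+1 = (p:ℕ) <;>
      simp [h1, h2] <;> ring
  have hMK0 : ∀ i : Fin (n+1), (M * K) i 0 = M i 0 := by
    intro i
    rw [Matrix.mul_apply, Finset.sum_congr rfl (fun q _ => expand i 0 q),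
      Finset.sum_add_distrib]
    have h2 : ∀ q : Fin (n+1), (if (q:ℕ)+1 = ((0:Fin (n+1)):ℕ) then -x * M i q else 0) = 0 := by
      intro q; rw [if_neg (by simp)]
    rw [Finset.sum_congr rfl (fun q _ => h2 q), Finset.sum_const_zero, add_zero,
      Finset.sum_ite_eq' Finset.univ 0 (fun q => M i q), if_pos (Finset.mem_univ _)]
  have hMK : ∀ (i : Fin (n+1)) (m : Fin n),
      (M * K) i m.succ = M i m.succ - x * M i m.castSucc := by
    intro i m
    rw [Matrix.mul_apply, Finset.sum_congr rfl (fun q _ => expand i m.succ q),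
      Finset.sum_add_distrib]
    have h2 : ∀ q : Fin (n+1), (if (q:ℕ)+1 = ((m.succ:Fin (n+1)):ℕ) then -x * M i q else 0)
        = (if q = m.castSucc then -x * M i q else 0) := by
      intro q
      have : ((q:ℕ)+1 = ((m.succ:Fin (n+1)):ℕ)) ↔ (q = m.castSucc) := by
        rw [Fin.ext_iff, Fin.coe_castSucc, Fin.val_succ]
        omega
      by_cases hq : (q:ℕ)+1 = ((m.succ:Fin (n+1)):ℕ)
      · rw [if_pos hq, if_pos (this.mp hq)]
      · rw [if_neg hq, if_neg (fun hc => hq (this.mpr hc))]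
    rw [Finset.sum_congr rfl (fun q _ => h2 q),
      Finset.sum_ite_eq' Finset.univ m.castSucc (fun q => -x * M i q),
      if_pos (Finset.mem_univ _),
      Finset.sum_ite_eq' Finset.univ m.succ (fun q => M i q),
      if_pos (Finset.mem_univ _)]
    ring
  have hdet : M.det = (M * K).det := by rw [Matrix.det_mul, hK, mul_one]
  rw [hdet, Matrix.det_succ_row (M * K) (Fin.last n)]
  rw [Finset.sum_eq_single 0]
  · rw [hMK0, h 0]
    simp only [Fin.val_last, Fin.val_zero, add_zero, pow_zero, mul_one]
    congr 1
    rw [Fin.succAbove_last, Fin.succAbove_zero]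
    congr 1
    ext j m
    simp only [Matrix.submatrix_apply, Matrix.of_apply]
    exact hMK j.castSucc m
  · intro j _ hj
    obtain ⟨m, rfl⟩ := Fin.exists_succ_eq.mpr hj
    rw [hMK, h, h]
    simp only [Fin.val_succ, Fin.coe_castSucc, pow_succ]
    ring_nf
  · intro hc
    exact absurd (Finset.mem_univ 0) hc

namespace AKPaux
variable {N : ℕ}

lemma det_factor_row {k : ℕ} (M : Matrix (Fin k) (Fin k) ℂ) (r : Fin k) (c : ℂ)
    (v : Fin k → ℂ) (h : ∀ p, M r p = c * v p) :
    M.det = c * (M.updateRow r v).det := by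
  have hM : M = (M.updateRow r v).updateRow r (c • v) := by
    ext i j
    by_cases hi : i = r
    · subst hi
      rw [Matrix.updateRow_self]
      simp [h j]
    · rw [Matrix.updateRow_ne hi, Matrix.updateRow_ne hi]
  conv_lhs => rw [hM]
  rw [Matrix.det_updateRow_smul]
  have h2 : (M.updateRow r v).updateRow r v = M.updateRow r v := by
    ext i j
    by_cases hi : i = r
    · subst hi; rw [Matrix.updateRow_self, Matrix.updateRow_self]
    · rw [Matrix.updateRow_ne hi, Matrix.updateRow_ne hi]
  rw [h2]

def S1 (x : ℂ) (f : ℕ → ℂ) : ℕ → ℂ := fun m => f (m+1) - x * f m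

lemma hlast2 : Fin.last (N+2) = Fin.natAdd N (2:Fin 3) := by
  apply Fin.ext; simp
lemma hlast1 : (Fin.last (N+1)).castSucc = Fin.natAdd N (1:Fin 3) := by
  apply Fin.ext; simp
lemma hlast0 : (Fin.last N).castSucc.castSucc = Fin.natAdd N (0:Fin 3) := by
  apply Fin.ext; simp
lemma hrowj (j : Fin N) : j.castSucc.castSucc.castSucc = Fin.castAdd 3 j := by
  apply Fin.ext; simp

lemma Dt_gEF (Φ : Fin N → ℕ → ℂ) (x : ℂ) :
    Dt (fun j p => Φ j (p:ℕ)) (fun p => x^(p:ℕ))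
       (fun p => if (p:ℕ) = N+1 then 1 else 0) (fun p => if (p:ℕ) = N+2 then 1 else 0)
    = (-1:ℂ)^N * (Matrix.of fun (j m : Fin N) => S1 x (Φ j) (m:ℕ)).det := by
  set A : Matrix (Fin (N+3)) (Fin (N+3)) ℂ := Matrix.of (Fin.append (fun j p => Φ j (p:ℕ))
    ![fun p => x^(p:ℕ), fun p => if (p:ℕ) = N+1 then 1 else 0,
      fun p => if (p:ℕ) = N+2 then 1 else 0]) with hA
  show A.det = _
  have step1 : A.det = (A.submatrix Fin.castSucc Fin.castSucc).det := by
    rw [Matrix.det_succ_row A (Fin.last (N+2)), Finset.sum_eq_single (Fin.last (N+2))]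
    · have hv : A (Fin.last (N+2)) (Fin.last (N+2)) = 1 := by
        rw [hA, hlast2, row_natAdd]
        simp
      rw [hv]
      have hsg : (-1:ℂ)^(((Fin.last (N+2)):ℕ) + ((Fin.last (N+2)):ℕ)) = 1 :=
        Even.neg_one_pow ⟨(N+2), by simp⟩
      rw [hsg, Fin.succAbove_last]
      ring
    · intro j _ hj
      have hv : A (Fin.last (N+2)) j = 0 := by
        rw [hA, hlast2, row_natAdd]
        have : (j:ℕ) ≠ N+2 := by
          intro hc
          exact hj (Fin.ext (by simp [hc]))
        simp [this]
      rw [hv]; ring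
    · intro hc; exact absurd (Finset.mem_univ _) hc
  have step2 : (A.submatrix Fin.castSucc Fin.castSucc).det
      = ((A.submatrix Fin.castSucc Fin.castSucc).submatrix Fin.castSucc Fin.castSucc).det := by
    set B := A.submatrix Fin.castSucc Fin.castSucc with hB
    rw [Matrix.det_succ_row B (Fin.last (N+1)), Finset.sum_eq_single (Fin.last (N+1))]
    · have hv : B (Fin.last (N+1)) (Fin.last (N+1)) = 1 := by
        rw [hB, Matrix.submatrix_apply, hA, hlast1, row_natAdd]
        simp
      rw [hv]
      have hsg : (-1:ℂ)^(((Fin.last (N+1)):ℕ) + ((Fin.last (N+1)):ℕ)) = 1 :=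
        Even.neg_one_pow ⟨(N+1), by simp⟩
      rw [hsg, Fin.succAbove_last]
      ring
    · intro j _ hj
      have hv : B (Fin.last (N+1)) j = 0 := by
        rw [hB, Matrix.submatrix_apply, hA, hlast1, row_natAdd]
        have hne : (j:ℕ) ≠ N+1 := by
          intro hc
          exact hj (Fin.ext (by simp [hc]))
        simp [Fin.coe_castSucc, hne]
      rw [hv]; ring
    · intro hc; exact absurd (Finset.mem_univ _) hc
  set C := (A.submatrix Fin.castSucc Fin.castSucc).submatrix Fin.castSucc Fin.castSucc with hC
  have step3 : C.det = (-1:ℂ)^N * (Matrix.of fun (j m : Fin N) =>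
      C j.castSucc m.succ - x * C j.castSucc m.castSucc).det := by
    apply red
    intro p
    rw [hC, Matrix.submatrix_apply, Matrix.submatrix_apply, hA, hlast0, row_natAdd]
    simp
  have hrowA : ∀ (jj : Fin N) (p : Fin (N+3)),
      A jj.castSucc.castSucc.castSucc p = Φ jj (p:ℕ) := by
    intro jj p
    rw [hA, hrowj jj]
    exact congrFun (row_castAdd _ _ jj) p
  have hent : (Matrix.of fun (j m : Fin N) =>
      C j.castSucc m.succ - x * C j.castSucc m.castSucc)
      = Matrix.of fun (j m : Fin N) => S1 x (Φ j) (m:ℕ) := by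
    ext j m
    rw [Matrix.of_apply, Matrix.of_apply, hC]
    simp only [Matrix.submatrix_apply]
    rw [hrowA, hrowA]
    simp [S1]
  rw [step1, step2, step3, hent]

end AKPaux

namespace AKPaux
variable {N : ℕ}

lemma Dt_ggg (Φ : Fin N → ℕ → ℂ) (x y z : ℂ) :
    Dt (fun j p => Φ j (p:ℕ)) (fun p => x^(p:ℕ)) (fun p => y^(p:ℕ)) (fun p => z^(p:ℕ))
    = (-1:ℂ)^(N+1) * ((y - z) * ((x - z) * (x - y))) *
      (Matrix.of fun (j m : Fin N) => S1 x (S1 y (S1 z (Φ j))) (m:ℕ)).det := by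
  set A : Matrix (Fin (N+3)) (Fin (N+3)) ℂ := Matrix.of (Fin.append (fun j p => Φ j (p:ℕ))
    ![fun p => x^(p:ℕ), fun p => y^(p:ℕ), fun p => z^(p:ℕ)]) with hA
  show A.det = _
  have hrowA : ∀ (jj : Fin N) (p : Fin (N+3)),
      A jj.castSucc.castSucc.castSucc p = Φ jj (p:ℕ) := by
    intro jj p
    rw [hA, hrowj jj]
    exact congrFun (row_castAdd _ _ jj) p
  have hrow0 : ∀ p : Fin (N+3), A (Fin.last N).castSucc.castSucc p = x^(p:ℕ) := by
    intro p
    rw [hA, hlast0]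
    exact congrFun (row_natAdd _ _ 0) p
  have hrow1 : ∀ p : Fin (N+3), A (Fin.last (N+1)).castSucc p = y^(p:ℕ) := by
    intro p
    rw [hA, hlast1]
    exact congrFun (row_natAdd _ _ 1) p
  -- step 1 : reduce with z
  set A1 : Matrix (Fin (N+2)) (Fin (N+2)) ℂ := Matrix.of fun (j m : Fin (N+2)) =>
    A j.castSucc m.succ - z * A j.castSucc m.castSucc with hA1
  have step1 : A.det = (-1:ℂ)^(N+2) * A1.det := by
    apply red
    intro p
    rw [hA, hlast2]
    exact congrFun (row_natAdd _ _ 2) p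
  -- step 2 : factor (y - z) from the last row of A1
  set A1' : Matrix (Fin (N+2)) (Fin (N+2)) ℂ :=
    A1.updateRow (Fin.last (N+1)) (fun m => y^(m:ℕ)) with hA1'
  have step2 : A1.det = (y - z) * A1'.det := by
    apply det_factor_row
    intro p
    rw [hA1, Matrix.of_apply, hrow1, hrow1]
    simp only [Fin.val_succ, Fin.coe_castSucc, pow_succ]
    ring
  -- step 3 : reduce with y
  set A2 : Matrix (Fin (N+1)) (Fin (N+1)) ℂ := Matrix.of fun (j m : Fin (N+1)) =>
    A1' j.castSucc m.succ - y * A1' j.castSucc m.castSucc with hA2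
  have step3 : A1'.det = (-1:ℂ)^(N+1) * A2.det := by
    apply red
    intro p
    rw [hA1', Matrix.updateRow_self]
  have hA1'cs : ∀ (j : Fin (N+1)) (m : Fin (N+2)), A1' j.castSucc m = A1 j.castSucc m := by
    intro j m
    rw [hA1', Matrix.updateRow_ne (Fin.castSucc_lt_last j).ne]
  -- step 4 : factor (x - z)(x - y) from the last row of A2
  set A2' : Matrix (Fin (N+1)) (Fin (N+1)) ℂ :=
    A2.updateRow (Fin.last N) (fun m => x^(m:ℕ)) with hA2'
  have step4 : A2.det = ((x - z) * (x - y)) * A2'.det := by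
    apply det_factor_row
    intro p
    rw [hA2, Matrix.of_apply, hA1'cs, hA1'cs, hA1, Matrix.of_apply, Matrix.of_apply,
      hrow0, hrow0, hrow0, hrow0]
    simp only [Fin.val_succ, Fin.coe_castSucc, pow_succ]
    ring
  -- step 5 : reduce with x
  set A3 : Matrix (Fin N) (Fin N) ℂ := Matrix.of fun (j m : Fin N) =>
    A2' j.castSucc m.succ - x * A2' j.castSucc m.castSucc with hA3
  have step5 : A2'.det = (-1:ℂ)^N * A3.det := by
    apply red
    intro p
    rw [hA2', Matrix.updateRow_self]
  have hA2'cs : ∀ (j : Fin N) (m : Fin (N+1)), A2' j.castSucc m = A2 j.castSucc m := by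
    intro j m
    rw [hA2', Matrix.updateRow_ne (Fin.castSucc_lt_last j).ne]
  -- identify A3
  have hent : A3 = Matrix.of fun (j m : Fin N) => S1 x (S1 y (S1 z (Φ j))) (m:ℕ) := by
    ext j m
    rw [hA3, Matrix.of_apply, Matrix.of_apply, hA2'cs, hA2'cs, hA2,
      Matrix.of_apply, Matrix.of_apply, hA1'cs, hA1'cs, hA1'cs, hA1'cs,
      hA1]
    simp only [Matrix.of_apply]
    rw [hrowA, hrowA, hrowA, hrowA, hrowA, hrowA, hrowA, hrowA]
    simp only [S1, Fin.val_succ, Fin.coe_castSucc]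
  have hs : ((-1:ℂ)^N) * ((-1:ℂ)^N) = 1 := by
    rw [← pow_add]
    exact Even.neg_one_pow ⟨N, rfl⟩
  rw [step1, step2, step3, step4, step5, hent]
  linear_combination (-((-1:ℂ)^N) * ((y - z) * ((x - z) * (x - y)) *
    (Matrix.of fun (j m : Fin N) => S1 x (S1 y (S1 z (Φ j))) (m:ℕ)).det)) * hs

end AKPaux

open AKPaux in
theorem stmt_14 (N : ℕ) (hN : 1 ≤ N) (a1 a2 a3 a4 : ℂ) (k ρp ρm : Fin N → ℂ)
    (ha1 : ∀ j, a1 + k j ≠ 0) (ha1' : ∀ j, a1 - k j ≠ 0)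
    (ha2 : ∀ j, a2 + k j ≠ 0) (ha2' : ∀ j, a2 - k j ≠ 0)
    (ha3 : ∀ j, a3 + k j ≠ 0) (ha3' : ∀ j, a3 - k j ≠ 0)
    (ha4 : ∀ j, a4 + k j ≠ 0) (ha4' : ∀ j, a4 - k j ≠ 0)
    (ψ : Fin N → ℤ → ℤ → ℤ → ℤ → ℂ)
    (hψ : ∀ j n1 n2 n3 n4, ψ j n1 n2 n3 n4 =
      ρp j * (a1 + k j) ^ n1 * (a2 + k j) ^ n2 * (a3 + k j) ^ n3 * (a4 + k j) ^ n4 +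
      ρm j * (a1 - k j) ^ n1 * (a2 - k j) ^ n2 * (a3 - k j) ^ n3 * (a4 - k j) ^ n4)
    (τ : ℤ → ℤ → ℤ → ℤ → ℂ)
    (hτ : ∀ n1 n2 n3 n4, τ n1 n2 n3 n4 =
      (Matrix.of fun j m : Fin N => ψ j (n1 + (m.1 : ℤ)) n2 n3 n4).det) :
    ∀ n1 n2 n3 n4 : ℤ,
      (a2 - a3) * (a3 - a4) * (a2 - a4) * τ (n1 + 1) n2 n3 n4 * τ n1 (n2 + 1) (n3 + 1) (n4 + 1) -
      (a1 - a3) * (a3 - a4) * (a1 - a4) * τ n1 (n2 + 1) n3 n4 * τ (n1 + 1) n2 (n3 + 1) (n4 + 1) +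
      (a1 - a2) * (a2 - a4) * (a1 - a4) * τ n1 n2 (n3 + 1) n4 * τ (n1 + 1) (n2 + 1) n3 (n4 + 1) -
      (a1 - a2) * (a2 - a3) * (a1 - a3) * τ n1 n2 n3 (n4 + 1) * τ (n1 + 1) (n2 + 1) (n3 + 1) n4 = 0 := by
  intro n1 n2 n3 n4
  have hrec2 : ∀ (j : Fin N) (w u2 u3 u4 : ℤ), ψ j w (u2+1) u3 u4
      = (a2 - a1) * ψ j w u2 u3 u4 + ψ j (w+1) u2 u3 u4 := by
    intro j w u2 u3 u4
    rw [hψ, hψ, hψ, zpow_add_one₀ (ha2 j), zpow_add_one₀ (ha2' j),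
      zpow_add_one₀ (ha1 j), zpow_add_one₀ (ha1' j)]
    ring
  have hrec3 : ∀ (j : Fin N) (w u2 u3 u4 : ℤ), ψ j w u2 (u3+1) u4
      = (a3 - a1) * ψ j w u2 u3 u4 + ψ j (w+1) u2 u3 u4 := by
    intro j w u2 u3 u4
    rw [hψ, hψ, hψ, zpow_add_one₀ (ha3 j), zpow_add_one₀ (ha3' j),
      zpow_add_one₀ (ha1 j), zpow_add_one₀ (ha1' j)]
    ring
  have hrec4 : ∀ (j : Fin N) (w u2 u3 u4 : ℤ), ψ j w u2 u3 (u4+1)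
      = (a4 - a1) * ψ j w u2 u3 u4 + ψ j (w+1) u2 u3 u4 := by
    intro j w u2 u3 u4
    rw [hψ, hψ, hψ, zpow_add_one₀ (ha4 j), zpow_add_one₀ (ha4' j),
      zpow_add_one₀ (ha1 j), zpow_add_one₀ (ha1' j)]
    ring
  set Φ0 : Fin N → ℕ → ℂ := fun j p => ψ j (n1 + (p:ℤ)) n2 n3 n4 with hΦ0
  have hEx := exchange (fun j p => Φ0 j (p:ℕ))
    (fun p => if (p:ℕ) = N+1 then 1 else 0) (fun p => if (p:ℕ) = N+2 then 1 else 0)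
    (fun p => (-(a1-a1))^(p:ℕ)) (fun p => (-(a2-a1))^(p:ℕ))
    (fun p => (-(a3-a1))^(p:ℕ)) (fun p => (-(a4-a1))^(p:ℕ))
  unfold Gq at hEx
  rw [Dt_gEF Φ0 (-(a1-a1)), Dt_gEF Φ0 (-(a2-a1)), Dt_gEF Φ0 (-(a3-a1)),
    Dt_gEF Φ0 (-(a4-a1)),
    Dt_ggg Φ0 (-(a2-a1)) (-(a3-a1)) (-(a4-a1)),
    Dt_ggg Φ0 (-(a1-a1)) (-(a3-a1)) (-(a4-a1)),
    Dt_ggg Φ0 (-(a1-a1)) (-(a2-a1)) (-(a4-a1)),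
    Dt_ggg Φ0 (-(a1-a1)) (-(a2-a1)) (-(a3-a1))] at hEx
  have hd1 : (Matrix.of fun (j m : Fin N) => S1 (-(a1-a1)) (Φ0 j) (m:ℕ)).det
      = τ (n1+1) n2 n3 n4 := by
    rw [hτ]
    congr 1
    ext j m
    simp only [Matrix.of_apply, S1, hΦ0]
    push_cast
    ring_nf
  have hd2 : (Matrix.of fun (j m : Fin N) => S1 (-(a2-a1)) (Φ0 j) (m:ℕ)).det
      = τ n1 (n2+1) n3 n4 := by
    rw [hτ]
    congr 1
    ext j m
    simp only [Matrix.of_apply, S1, hΦ0]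
    rw [hrec2 j (n1 + (m.1:ℤ)) n2 n3 n4]
    push_cast
    ring_nf
  have hd3 : (Matrix.of fun (j m : Fin N) => S1 (-(a3-a1)) (Φ0 j) (m:ℕ)).det
      = τ n1 n2 (n3+1) n4 := by
    rw [hτ]
    congr 1
    ext j m
    simp only [Matrix.of_apply, S1, hΦ0]
    rw [hrec3 j (n1 + (m.1:ℤ)) n2 n3 n4]
    push_cast
    ring_nf
  have hd4 : (Matrix.of fun (j m : Fin N) => S1 (-(a4-a1)) (Φ0 j) (m:ℕ)).det
      = τ n1 n2 n3 (n4+1) := by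
    rw [hτ]
    congr 1
    ext j m
    simp only [Matrix.of_apply, S1, hΦ0]
    rw [hrec4 j (n1 + (m.1:ℤ)) n2 n3 n4]
    push_cast
    ring_nf
  have hd234 : (Matrix.of fun (j m : Fin N) =>
      S1 (-(a2-a1)) (S1 (-(a3-a1)) (S1 (-(a4-a1)) (Φ0 j))) (m:ℕ)).det
      = τ n1 (n2+1) (n3+1) (n4+1) := by
    rw [hτ]
    congr 1
    ext j m
    simp only [Matrix.of_apply, S1, hΦ0]
    rw [hrec2 j (n1 + (m.1:ℤ)) n2 (n3+1) (n4+1)]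
    rw [hrec3 j (n1 + (m.1:ℤ)) n2 n3 (n4+1),
      hrec3 j (n1 + (m.1:ℤ) + 1) n2 n3 (n4+1)]
    rw [hrec4 j (n1 + (m.1:ℤ)) n2 n3 n4, hrec4 j (n1 + (m.1:ℤ) + 1) n2 n3 n4,
      hrec4 j (n1 + (m.1:ℤ) + 1 + 1) n2 n3 n4]
    push_cast
    ring_nf
  have hd134 : (Matrix.of fun (j m : Fin N) =>
      S1 (-(a1-a1)) (S1 (-(a3-a1)) (S1 (-(a4-a1)) (Φ0 j))) (m:ℕ)).det
      = τ (n1+1) n2 (n3+1) (n4+1) := by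
    rw [hτ]
    congr 1
    ext j m
    simp only [Matrix.of_apply, S1, hΦ0]
    rw [hrec3 j (n1 + 1 + (m.1:ℤ)) n2 n3 (n4+1)]
    rw [hrec4 j (n1 + 1 + (m.1:ℤ)) n2 n3 n4, hrec4 j (n1 + 1 + (m.1:ℤ) + 1) n2 n3 n4]
    push_cast
    ring_nf
  have hd124 : (Matrix.of fun (j m : Fin N) =>
      S1 (-(a1-a1)) (S1 (-(a2-a1)) (S1 (-(a4-a1)) (Φ0 j))) (m:ℕ)).det
      = τ (n1+1) (n2+1) n3 (n4+1) := by
    rw [hτ]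
    congr 1
    ext j m
    simp only [Matrix.of_apply, S1, hΦ0]
    rw [hrec2 j (n1 + 1 + (m.1:ℤ)) n2 n3 (n4+1)]
    rw [hrec4 j (n1 + 1 + (m.1:ℤ)) n2 n3 n4, hrec4 j (n1 + 1 + (m.1:ℤ) + 1) n2 n3 n4]
    push_cast
    ring_nf
  have hd123 : (Matrix.of fun (j m : Fin N) =>
      S1 (-(a1-a1)) (S1 (-(a2-a1)) (S1 (-(a3-a1)) (Φ0 j))) (m:ℕ)).det
      = τ (n1+1) (n2+1) (n3+1) n4 := by
    rw [hτ]
    congr 1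
    ext j m
    simp only [Matrix.of_apply, S1, hΦ0]
    rw [hrec2 j (n1 + 1 + (m.1:ℤ)) n2 (n3+1) n4]
    rw [hrec3 j (n1 + 1 + (m.1:ℤ)) n2 n3 n4, hrec3 j (n1 + 1 + (m.1:ℤ) + 1) n2 n3 n4]
    push_cast
    ring_nf
  rw [hd1, hd2, hd3, hd4, hd234, hd134, hd124, hd123] at hEx
  have hs : ((-1:ℂ)^N) * ((-1:ℂ)^N) = 1 := by
    rw [← pow_add]
    exact Even.neg_one_pow ⟨N, rfl⟩
  linear_combination hEx + (-(
      (a2 - a3) * (a3 - a4) * (a2 - a4) * τ (n1 + 1) n2 n3 n4 * τ n1 (n2 + 1) (n3 + 1) (n4 + 1) -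
      (a1 - a3) * (a3 - a4) * (a1 - a4) * τ n1 (n2 + 1) n3 n4 * τ (n1 + 1) n2 (n3 + 1) (n4 + 1) +
      (a1 - a2) * (a2 - a4) * (a1 - a4) * τ n1 n2 (n3 + 1) n4 * τ (n1 + 1) (n2 + 1) n3 (n4 + 1) -
      (a1 - a2) * (a2 - a3) * (a1 - a3) * τ n1 n2 n3 (n4 + 1) * τ (n1 + 1) (n2 + 1) (n3 + 1) n4)) * hs
end

section
/- Let τ(n1,n2,n3,n4) be the Casoratian in the direction n1 of the vector ψ with entries ψ_j(n1,n2,n3,n4) = ρ_j^+ ∏_{i=1}^4 (a_i+k_j)^{n_i} + ρ_j^- ∏_{i=1}^4 (a_i−k_j)^{n_i}. Then τ satisfies the four reflected 4D discrete AKP equations at every point: 𝔄1 := (a2−a3)(a3−a4)(a2−a4) τ τ_1234 − (a1+a3)(a3−a4)(a1+a4) τ_12 τ_34 + (a1+a2)(a2−a4)(a1+a4) τ_13 τ_24 − (a1+a2)(a2−a3)(a1+a3) τ_14 τ_23 = 0; 𝔄2 := (a2+a3)(a3−a4)(a2+a4) τ_12 τ_34 − (a1−a3)(a3−a4)(a1−a4)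 τ τ_1234 − (a1+a2)(a2+a4)(a1−a4) τ_23 τ_14 + (a1+a2)(a2+a3)(a1−a3) τ_24 τ_13 = 0; 𝔄3 := −(a2+a3)(a3+a4)(a2−a4) τ_13 τ_24 + (a1+a3)(a3+a4)(a1−a4) τ_23 τ_14 + (a1−a2)(a2−a4)(a1−a4) τ τ_1234 − (a1−a2)(a2+a3)(a1+a3) τ_34 τ_12 = 0; and 𝔄4 := (a2−a3)(a3+a4)(a2+a4) τ_14 τ_23 − (a1−a3)(a3+a4)(a1+a4) τ_24 τ_13 + (a1−a2)(a2+a4)(a1+a4) τ_34 τ_12 − (a1−a2)(a2−a3)(a1−a3) τ τ_1234 = 0. -/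
namespace Stmt15Aux

open Matrix BigOperators Finset

def app1 {N : ℕ} (z : ℂ) (u : ℤ → Fin N → ℂ) : ℤ → Fin N → ℂ :=
  fun m j => u (m + 1) j - z * u m j

def CAS {N : ℕ} (u : ℤ → Fin N → ℂ) : ℂ :=
  (Matrix.of fun (j m : Fin N) => u ((m : ℕ) : ℤ) j).det

def Bmat {N : ℕ} (d : ℕ) (u : ℤ → Fin N → ℂ) (w : Fin d → ℂ) :
    Matrix (Fin (N + d)) (Fin (N + d)) ℂ :=
  Matrix.of fun i m =>
    if h : (i : ℕ) < N then u ((m : ℕ) : ℤ) ⟨i, h⟩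
    else (w ⟨(i : ℕ) - N, by omega⟩) ^ (m : ℕ)

/-- Clearing a geometric last row: one border-reduction step. -/
theorem step (n : ℕ) (A : Matrix (Fin (n + 1)) (Fin (n + 1)) ℂ) (z : ℂ)
    (hA : ∀ m, A (Fin.last n) m = z ^ (m : ℕ)) :
    A.det = (-1 : ℂ) ^ n *
      (Matrix.of fun (i m : Fin n) =>
        A i.castSucc m.succ - z * A i.castSucc m.castSucc).det := by
  classical
  set T : Matrix (Fin (n + 1)) (Fin (n + 1)) ℂ :=
    Matrix.of fun k m => if k = m then 1 else if (k : ℕ) + 1 = (m : ℕ) then -z else 0 with hT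
  have hTdet : T.det = 1 := by
    have htri : T.BlockTriangular id := by
      intro i j hij
      have hij' : (j : ℕ) < (i : ℕ) := hij
      have h1 : i ≠ j := by intro h; omega
      have h2 : ¬((i : ℕ) + 1 = (j : ℕ)) := by omega
      simp [hT, h1, h2]
    rw [Matrix.det_of_upperTriangular htri]
    apply Finset.prod_eq_one
    intro i _
    simp [hT]
  have hmul : (A * T).det = A.det := by rw [Matrix.det_mul, hTdet, mul_one]
  have hATentry : ∀ (i : Fin (n+1)) (m : Fin (n+1)),
      (A * T) i m = Fin.cases (A i 0) (fun m' => A i m'.succ - z * A i m'.castSucc) m := by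
    intro i m
    rw [Matrix.mul_apply]
    have hsplit : ∀ k : Fin (n+1), A i k * T k m
        = (if k = m then A i k else 0) + (if (k : ℕ) + 1 = (m : ℕ) then (-z) * A i k else 0) := by
      intro k
      by_cases h1 : k = m
      · have h2 : ¬ ((k : ℕ) + 1 = (m : ℕ)) := by subst h1; omega
        simp [hT, h1, h2]
      · by_cases h2 : (k : ℕ) + 1 = (m : ℕ)
        · simp [hT, h1, h2]; ring
        · simp [hT, h1, h2]
    rw [Finset.sum_congr rfl (fun k _ => hsplit k), Finset.sum_add_distrib]
    rw [Finset.sum_ite_eq' Finset.univ m (fun k => A i k)]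
    simp only [Finset.mem_univ, if_true]
    induction m using Fin.cases with
    | zero =>
      have : ∀ k : Fin (n+1), ¬ ((k : ℕ) + 1 = ((0 : Fin (n+1)) : ℕ)) := by
        intro k; simp
      rw [Finset.sum_eq_zero (fun k _ => by rw [if_neg (this k)])]
      simp
    | succ m' =>
      rw [Finset.sum_eq_single m'.castSucc]
      · simp [Fin.val_succ]
        ring
      · intro b _ hb
        rw [if_neg]
        intro hc
        apply hb
        have : (b : ℕ) = (m' : ℕ) := by simp [Fin.val_succ] at hc; omega
        exact Fin.ext (by simpa using this)
      · intro h; exact absurd (Finset.mem_univ _) h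
  -- expand along last row
  rw [← hmul, Matrix.det_succ_row (A * T) (Fin.last n)]
  rw [Finset.sum_eq_single 0]
  · rw [hATentry]
    simp only [Fin.cases_zero, hA, pow_zero]
    have : ((A * T).submatrix (Fin.last n).succAbove (Fin.succAbove 0)).det
        = (Matrix.of fun (i m : Fin n) =>
            A i.castSucc m.succ - z * A i.castSucc m.castSucc).det := by
      congr 1
      ext i m
      rw [Matrix.submatrix_apply, Fin.succAbove_last, Fin.zero_succAbove, hATentry]
      simp
    rw [this]
    simp [Fin.val_last]
  · intro b _ hb
    rw [hATentry]
    induction b using Fin.cases with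
    | zero => exact absurd rfl hb
    | succ m' =>
      simp only [Fin.cases_succ, hA]
      have : z ^ ((m'.succ : Fin (n+1)) : ℕ) - z * z ^ ((m'.castSucc : Fin (n+1)) : ℕ) = 0 := by
        rw [Fin.val_succ, Fin.coe_castSucc, pow_succ]
        ring
      rw [this]
      ring
  · intro h; exact absurd (Finset.mem_univ _) h


theorem bmat_zero {N : ℕ} (u : ℤ → Fin N → ℂ) (w : Fin 0 → ℂ) :
    (Bmat 0 u w).det = CAS u := by
  unfold Bmat CAS
  congr 1
  ext i m
  simp only [Matrix.of_apply]
  rw [dif_pos (show (i : ℕ) < N from i.isLt)]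
  exact congrArg (u ((m : ℕ) : ℤ)) (Fin.eta i i.isLt)


theorem bstep {N : ℕ} (d : ℕ) (u : ℤ → Fin N → ℂ) (w : Fin (d + 1) → ℂ) :
    (Bmat (d + 1) u w).det = (-1 : ℂ) ^ (N + d) *
      ((∏ t : Fin d, (w t.castSucc - w (Fin.last d))) *
        (Bmat d (app1 (w (Fin.last d)) u) (w ∘ Fin.castSucc)).det) := by
  classical
  have hlast : ∀ m, (Bmat (d+1) u w) (Fin.last (N + d)) m = (w (Fin.last d)) ^ (m : ℕ) := by
    intro m
    have h1 : ¬ ((Fin.last (N + d) : ℕ) < N) := by simp [Fin.val_last]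
    simp only [Bmat, Matrix.of_apply, dif_neg h1]
    congr 2
    ext
    simp [Fin.val_last]
  have hstep := step (N + d) (Bmat (d+1) u w) (w (Fin.last d)) hlast
  refine hstep.trans ?_
  congr 1
  set z := w (Fin.last d) with hz
  set v : Fin (N + d) → ℂ := fun i =>
    if h : (i : ℕ) < N then 1 else (w ⟨(i:ℕ) - N, by omega⟩ - z) with hv
  have hmatch : (Matrix.of fun (i m : Fin (N + d)) =>
      (Bmat (d+1) u w) i.castSucc m.succ - z * (Bmat (d+1) u w) i.castSucc m.castSucc)
      = Matrix.of (fun (i m : Fin (N + d)) =>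
          v i * (Bmat d (app1 z u) (w ∘ Fin.castSucc)) i m) := by
    ext i m
    simp only [Matrix.of_apply, Bmat, hv]
    by_cases h : (i : ℕ) < N
    · have hc : ((i.castSucc : Fin (N + d + 1)) : ℕ) < N := by
        rwa [Fin.coe_castSucc]
      rw [dif_pos hc, dif_pos hc, dif_pos h, dif_pos h]
      have e1 : (((m.succ : Fin (N + d + 1)) : ℕ) : ℤ) = ((m : ℕ) : ℤ) + 1 := by
        rw [Fin.val_succ]; push_cast; ring
      have e2 : (((m.castSucc : Fin (N + d + 1)) : ℕ) : ℤ) = ((m : ℕ) : ℤ) := by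
        rw [Fin.coe_castSucc]
      rw [e1, e2]
      have : (⟨((i.castSucc : Fin (N+d+1)) : ℕ), hc⟩ : Fin N) = ⟨(i : ℕ), h⟩ := by
        ext; simp
      rw [this]
      simp only [app1]
      ring
    · have hc : ¬ (((i.castSucc : Fin (N + d + 1)) : ℕ) < N) := by
        rwa [Fin.coe_castSucc]
      rw [dif_neg hc, dif_neg hc, dif_neg h, dif_neg h]
      have hidx : (⟨((i.castSucc : Fin (N+d+1)) : ℕ) - N, by omega⟩ : Fin (d+1))
          = (⟨(i : ℕ) - N, by omega⟩ : Fin (d+1)) := by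
        ext; simp
      have hidx2 : Fin.castSucc (⟨(i : ℕ) - N, by omega⟩ : Fin d)
          = (⟨(i : ℕ) - N, by omega⟩ : Fin (d+1)) := by
        ext; simp
      rw [hidx]
      have e1 : ((m.succ : Fin (N + d + 1)) : ℕ) = (m : ℕ) + 1 := Fin.val_succ m
      have e2 : ((m.castSucc : Fin (N + d + 1)) : ℕ) = (m : ℕ) := Fin.coe_castSucc m
      rw [e1, e2, pow_succ]
      simp only [Function.comp_apply, hidx2]
      ring
  rw [hmatch]
  rw [Matrix.det_mul_column v]
  congr 1
  rw [Fin.prod_univ_add (fun i : Fin (N + d) => v i)]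
  have h1 : (∏ i : Fin N, v (Fin.castAdd d i)) = 1 := by
    apply Finset.prod_eq_one
    intro i _
    have : ((Fin.castAdd d i : Fin (N+d)) : ℕ) < N := by
      rw [Fin.coe_castAdd]; exact i.isLt
    simp only [hv, dif_pos this]
  have h2 : (∏ t : Fin d, v (Fin.natAdd N t))
      = ∏ t : Fin d, (w t.castSucc - z) := by
    apply Finset.prod_congr rfl
    intro t _
    have hnc : ¬ (((Fin.natAdd N t : Fin (N+d)) : ℕ) < N) := by
      rw [Fin.coe_natAdd]; omega
    simp only [hv, dif_neg hnc]
    congr 2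
    ext
    simp
  rw [h1, h2, one_mul]

theorem exchange (n : ℕ) (f : Fin (n + 1) → Fin n → ℂ) (φ : (Fin n → ℂ) → ℂ)
    (hadd : ∀ x y, φ (x + y) = φ x + φ y) (hsmul : ∀ (c : ℂ) x, φ (c • x) = c * φ x) :
    ∑ i : Fin (n + 1), (-1 : ℂ) ^ (i : ℕ) *
      (Matrix.of fun (i' : Fin n) (m : Fin n) => f (i.succAbove i') m).det * φ (f i) = 0 := by
  classical
  have hzero : φ 0 = 0 := by
    have := hsmul 0 0
    simpa using this
  have hsum : ∀ (s : Finset (Fin n)) (g : Fin n → (Fin n → ℂ)),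
      φ (∑ r ∈ s, g r) = ∑ r ∈ s, φ (g r) := by
    intro s
    induction s using Finset.cons_induction with
    | empty => intro g; simpa using hzero
    | cons a s ha ih =>
      intro g
      rw [Finset.sum_cons, hadd, ih, Finset.sum_cons]
  have hφ : ∀ x : Fin n → ℂ, φ x = ∑ r : Fin n, x r * φ (fun s => if s = r then 1 else 0) := by
    intro x
    have hx : x = ∑ r : Fin n, x r • (fun s => if s = r then 1 else 0 : Fin n → ℂ) := by
      funext s
      simp only [Finset.sum_apply, Pi.smul_apply, smul_eq_mul, mul_ite, mul_one, mul_zero]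
      rw [Finset.sum_ite_eq Finset.univ s x]
      simp
    conv_lhs => rw [hx]
    rw [hsum]
    apply Finset.sum_congr rfl
    intro r _
    rw [hsmul]
  calc ∑ i : Fin (n + 1), (-1 : ℂ) ^ (i : ℕ) *
        (Matrix.of fun (i' : Fin n) (m : Fin n) => f (i.succAbove i') m).det * φ (f i)
      = ∑ i : Fin (n + 1), ∑ r : Fin n, (f i r * φ (fun s => if s = r then 1 else 0)) *
          ((-1 : ℂ) ^ (i : ℕ) *
            (Matrix.of fun (i' : Fin n) (m : Fin n) => f (i.succAbove i') m).det) := by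
        apply Finset.sum_congr rfl
        intro i _
        rw [hφ (f i), Finset.mul_sum]
        apply Finset.sum_congr rfl
        intro r _
        ring
    _ = ∑ r : Fin n, φ (fun s => if s = r then 1 else 0) *
          ∑ i : Fin (n + 1), (-1 : ℂ) ^ (i : ℕ) * f i r *
            (Matrix.of fun (i' : Fin n) (m : Fin n) => f (i.succAbove i') m).det := by
        rw [Finset.sum_comm]
        apply Finset.sum_congr rfl
        intro r _
        rw [Finset.mul_sum]
        apply Finset.sum_congr rfl
        intro i _
        ring
    _ = 0 := by
        apply Finset.sum_eq_zero
        intro r _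
        set A : Matrix (Fin (n+1)) (Fin (n+1)) ℂ :=
          Matrix.of fun (i : Fin (n+1)) (j : Fin (n+1)) => (Fin.cons (f i r) (f i) : Fin (n+1) → ℂ) j with hA
        have hsubeq : ∀ i : Fin (n+1), A.submatrix i.succAbove Fin.succ
            = (Matrix.of fun (i' : Fin n) (m : Fin n) => f (i.succAbove i') m) := by
          intro i
          ext i' m
          simp [hA, Fin.cons_succ]
        have hdup : A.det = 0 := by
          apply Matrix.det_zero_of_column_eq (show (0 : Fin (n+1)) ≠ r.succ from
            (Fin.succ_ne_zero r).symm)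
          intro i
          simp [hA, Fin.cons_zero, Fin.cons_succ]
        have hmain : ∑ i : Fin (n + 1), (-1 : ℂ) ^ (i : ℕ) * f i r *
            (Matrix.of fun (i' : Fin n) (m : Fin n) => f (i.succAbove i') m).det = 0 := by
          calc ∑ i : Fin (n + 1), (-1 : ℂ) ^ (i : ℕ) * f i r *
              (Matrix.of fun (i' : Fin n) (m : Fin n) => f (i.succAbove i') m).det
              = ∑ i : Fin (n + 1), (-1 : ℂ) ^ (i : ℕ) * A i 0 *
                  (A.submatrix i.succAbove Fin.succ).det := by
                apply Finset.sum_congr rfl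
                intro i _
                rw [hsubeq i]
                simp [hA, Fin.cons_zero]
            _ = A.det := (Matrix.det_succ_column_zero A).symm
            _ = 0 := hdup
        rw [hmain, mul_zero]

theorem b1 {N : ℕ} (u : ℤ → Fin N → ℂ) (w : Fin 1 → ℂ) :
    (Bmat 1 u w).det = (-1 : ℂ) ^ N * CAS (app1 (w 0) u) := by
  have e1 : (Bmat 1 u w).det = (-1 : ℂ) ^ (N + 0) *
      ((∏ t : Fin 0, (w t.castSucc - w (Fin.last 0))) *
        (Bmat 0 (app1 (w (Fin.last 0)) u) (w ∘ Fin.castSucc)).det) := bstep 0 u w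
  rw [e1, bmat_zero]
  have h1 : (∏ t : Fin 0, (w t.castSucc - w (Fin.last 0))) = 1 := by simp
  have h2 : Fin.last 0 = (0 : Fin 1) := rfl
  rw [h1, h2, one_mul, Nat.add_zero]


theorem b3 {N : ℕ} (u : ℤ → Fin N → ℂ) (w : Fin 3 → ℂ) :
    (Bmat 3 u w).det = -((-1 : ℂ) ^ N) * ((w 0 - w 1) * ((w 0 - w 2) * (w 1 - w 2))) *
      CAS (app1 (w 0) (app1 (w 1) (app1 (w 2) u))) := by
  have e1 : (Bmat 3 u w).det = (-1 : ℂ) ^ (N + 2) *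
      ((∏ t : Fin 2, (w t.castSucc - w (Fin.last 2))) *
        (Bmat 2 (app1 (w (Fin.last 2)) u) (w ∘ Fin.castSucc)).det) := bstep 2 u w
  have e2 : (Bmat 2 (app1 (w (Fin.last 2)) u) (w ∘ Fin.castSucc)).det = (-1 : ℂ) ^ (N + 1) *
      ((∏ t : Fin 1, ((w ∘ Fin.castSucc) t.castSucc - (w ∘ Fin.castSucc) (Fin.last 1))) *
        (Bmat 1 (app1 ((w ∘ Fin.castSucc) (Fin.last 1)) (app1 (w (Fin.last 2)) u))
          ((w ∘ Fin.castSucc) ∘ Fin.castSucc)).det) :=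
    bstep 1 (app1 (w (Fin.last 2)) u) (w ∘ Fin.castSucc)
  have e3 : (Bmat 1 (app1 ((w ∘ Fin.castSucc) (Fin.last 1)) (app1 (w (Fin.last 2)) u))
        ((w ∘ Fin.castSucc) ∘ Fin.castSucc)).det
      = (-1 : ℂ) ^ N * CAS (app1 (((w ∘ Fin.castSucc) ∘ Fin.castSucc) 0)
          (app1 ((w ∘ Fin.castSucc) (Fin.last 1)) (app1 (w (Fin.last 2)) u))) :=
    b1 _ _
  rw [e1, e2, e3]
  have v1 : (w ∘ Fin.castSucc) (Fin.last 1) = w 1 := rfl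
  have v2 : w (Fin.last 2) = w 2 := rfl
  have v3 : ((w ∘ Fin.castSucc) ∘ Fin.castSucc) 0 = w 0 := rfl
  have hp2 : (∏ t : Fin 2, (w t.castSucc - w (Fin.last 2))) = (w 0 - w 2) * (w 1 - w 2) := by
    rw [Fin.prod_univ_two]
    rfl
  have hp1 : (∏ t : Fin 1, ((w ∘ Fin.castSucc) t.castSucc - (w ∘ Fin.castSucc) (Fin.last 1)))
      = (w 0 - w 1) := by
    rw [Fin.prod_univ_one]
    rfl
  rw [hp2, hp1, v1, v2, v3]
  have hsgn : (-1 : ℂ) ^ (N + 2) * (-1 : ℂ) ^ (N + 1) * (-1 : ℂ) ^ N = -((-1 : ℂ) ^ N) := by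
    have h2 : (-1 : ℂ) ^ (N + 2) = (-1 : ℂ) ^ N := by
      rw [pow_add]; norm_num
    have h1 : (-1 : ℂ) ^ (N + 1) = -(-1 : ℂ) ^ N := by
      rw [pow_add]; norm_num
    rw [h2, h1]
    have hsq : (-1 : ℂ) ^ N * (-1 : ℂ) ^ N = 1 := by
      rw [← pow_add]
      have : N + N = 2 * N := by ring
      rw [this, pow_mul]
      norm_num
    calc (-1:ℂ)^N * -(-1:ℂ)^N * (-1:ℂ)^N = -(((-1:ℂ)^N * (-1:ℂ)^N) * (-1:ℂ)^N) := by ring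
      _ = -((-1:ℂ)^N) := by rw [hsq, one_mul]
  calc (-1:ℂ)^(N+2) * ((w 0 - w 2) * (w 1 - w 2) *
          ((-1:ℂ)^(N+1) * ((w 0 - w 1) * ((-1:ℂ)^N *
            CAS (app1 (w 0) (app1 (w 1) (app1 (w 2) u)))))))
      = ((-1:ℂ)^(N+2) * (-1:ℂ)^(N+1) * (-1:ℂ)^N) * ((w 0 - w 1) * ((w 0 - w 2) * (w 1 - w 2))) *
          CAS (app1 (w 0) (app1 (w 1) (app1 (w 2) u))) := by ring
    _ = -((-1:ℂ)^N) * ((w 0 - w 1) * ((w 0 - w 2) * (w 1 - w 2))) *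
          CAS (app1 (w 0) (app1 (w 1) (app1 (w 2) u))) := by rw [hsgn]


theorem master {N : ℕ} (u : ℤ → Fin N → ℂ) (z0 z1 z2 z3 : ℂ) :
    (z1 - z2) * ((z1 - z3) * (z2 - z3)) * (CAS (app1 z0 u) * CAS (app1 z1 (app1 z2 (app1 z3 u))))
  - (z0 - z2) * ((z0 - z3) * (z2 - z3)) * (CAS (app1 z1 u) * CAS (app1 z0 (app1 z2 (app1 z3 u))))
  + (z0 - z1) * ((z0 - z3) * (z1 - z3)) * (CAS (app1 z2 u) * CAS (app1 z0 (app1 z1 (app1 z3 u))))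
  - (z0 - z1) * ((z0 - z2) * (z1 - z2)) * (CAS (app1 z3 u) * CAS (app1 z0 (app1 z1 (app1 z2 u))))
    = 0 := by
  classical
  set zv : Fin 4 → ℂ := ![z0, z1, z2, z3] with hzv
  set f : Fin (N + 4) → (Fin (N + 3) → ℂ) := fun i =>
    if h : (i : ℕ) < N then (fun m : Fin (N + 3) => u ((m : ℕ) : ℤ) ⟨(i : ℕ), h⟩)
    else (fun m : Fin (N + 3) => (zv ⟨(i : ℕ) - N, by omega⟩) ^ (m : ℕ)) with hf
  set Mb : Matrix (Fin (N + 1)) (Fin (N + 1)) ℂ := Matrix.of fun i m =>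
    if h : (i : ℕ) < N then u ((m : ℕ) : ℤ) ⟨(i : ℕ), h⟩ else 0 with hMb
  set φ : (Fin (N + 3) → ℂ) → ℂ := fun x =>
    (Mb.updateRow (Fin.last N) (fun m => x (Fin.castLE (by omega) m))).det with hφ
  have hadd : ∀ x y, φ (x + y) = φ x + φ y := by
    intro x y
    have hxy : (fun m : Fin (N+1) => (x + y) (Fin.castLE (by omega) m))
        = (fun m : Fin (N+1) => x (Fin.castLE (by omega) m))
          + (fun m : Fin (N+1) => y (Fin.castLE (by omega) m)) := by
      funext m; simp
    simp only [hφ, hxy]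
    exact Matrix.det_updateRow_add Mb (Fin.last N) _ _
  have hsmul : ∀ (c : ℂ) x, φ (c • x) = c * φ x := by
    intro c x
    have hcx : (fun m : Fin (N+1) => (c • x) (Fin.castLE (by omega) m))
        = c • (fun m : Fin (N+1) => x (Fin.castLE (by omega) m)) := by
      funext m; simp
    simp only [hφ, hcx]
    exact Matrix.det_updateRow_smul Mb (Fin.last N) c _
  set G : Fin (N + 4) → ℂ := fun i => (-1 : ℂ) ^ (i : ℕ) *
    (Matrix.of fun (i' : Fin (N + 3)) (m : Fin (N + 3)) => f (i.succAbove i') m).det * φ (f i)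
    with hG
  have hex : ∑ i : Fin (N + 4), G i = 0 := exchange (N + 3) f φ hadd hsmul
  rw [Fin.sum_univ_add (fun i : Fin (N + 4) => G i)] at hex
  have hfirst : ∀ i : Fin N, G (Fin.castAdd 4 i) = 0 := by
    intro i
    have hlt : ((Fin.castAdd 4 i : Fin (N + 4)) : ℕ) < N := by
      rw [Fin.coe_castAdd]; exact i.isLt
    have hfi : f (Fin.castAdd 4 i) = fun m : Fin (N + 3) => u ((m : ℕ) : ℤ) ⟨(i : ℕ), i.isLt⟩ := by
      simp only [hf, dif_pos hlt]
      have hidx : (⟨((Fin.castAdd 4 i : Fin (N + 4)) : ℕ), hlt⟩ : Fin N) = ⟨(i : ℕ), i.isLt⟩ := by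
        ext; rw [Fin.coe_castAdd]
      rw [hidx]
    have hφ0 : φ (f (Fin.castAdd 4 i)) = 0 := by
      rw [hfi]
      simp only [hφ]
      apply Matrix.det_zero_of_row_eq (i := (⟨(i : ℕ), by omega⟩ : Fin (N+1)))
        (j := Fin.last N)
      · intro h
        have hv := congrArg Fin.val h
        simp only [Fin.val_last] at hv
        omega
      · funext m
        rw [Matrix.updateRow_ne, Matrix.updateRow_self]
        · simp only [hMb, Matrix.of_apply, dif_pos i.isLt]
          rfl
        · intro h
          have hv := congrArg Fin.val h
          simp only [Fin.val_last] at hv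
          omega
    rw [hG]
    simp only [hφ0, mul_zero]
  rw [Finset.sum_eq_zero (fun i _ => hfirst i), zero_add, Fin.sum_univ_four] at hex
  have hφl : ∀ l : Fin 4, φ (f (Fin.natAdd N l)) = (-1 : ℂ) ^ N * CAS (app1 (zv l) u) := by
    intro l
    have hnl : ¬ ((Fin.natAdd N l : Fin (N + 4)) : ℕ) < N := by
      rw [Fin.coe_natAdd]; omega
    have hmat : Mb.updateRow (Fin.last N)
        (fun m => f (Fin.natAdd N l) (Fin.castLE (by omega) m))
        = Bmat 1 u (fun _ => zv l) := by
      ext i m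
      by_cases hi : i = Fin.last N
      · subst hi
        rw [Matrix.updateRow_self]
        have h1 : ¬ ((Fin.last N : ℕ) < N) := by simp [Fin.val_last]
        simp only [Bmat, Matrix.of_apply, dif_neg h1, hf, dif_neg hnl]
        have hidx : (⟨((Fin.natAdd N l : Fin (N + 4)) : ℕ) - N, by omega⟩ : Fin 4) = l := by
          ext; simp [Fin.coe_natAdd]
        rw [hidx]
        rfl
      · rw [Matrix.updateRow_ne hi]
        have hlt : (i : ℕ) < N := by
          have h1 := i.isLt
          have h2 : (i : ℕ) ≠ N := fun h => hi (by ext; simp [Fin.val_last, h])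
          omega
        simp only [hMb, Bmat, Matrix.of_apply, dif_pos hlt]
    simp only [hφ]
    rw [hmat, b1]
  have hDl : ∀ l : Fin 4,
      (Matrix.of fun (i' : Fin (N + 3)) (m : Fin (N + 3)) =>
        f ((Fin.natAdd N l).succAbove i') m)
      = Bmat 3 u (zv ∘ l.succAbove) := by
    intro l
    ext i' m
    simp only [Matrix.of_apply]
    by_cases h : (i' : ℕ) < N
    · have hcast : (Fin.castSucc i' : Fin (N + 4)) < Fin.natAdd N l := by
        rw [Fin.lt_def, Fin.coe_castSucc, Fin.coe_natAdd]
        omega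
      rw [Fin.succAbove_of_castSucc_lt _ _ hcast]
      have hlt : ((Fin.castSucc i' : Fin (N + 4)) : ℕ) < N := by
        rwa [Fin.coe_castSucc]
      simp only [hf, dif_pos hlt, Bmat, Matrix.of_apply, dif_pos h]
      have hidx : (⟨((Fin.castSucc i' : Fin (N + 4)) : ℕ), hlt⟩ : Fin N) = ⟨(i' : ℕ), h⟩ := by
        ext; rw [Fin.coe_castSucc]
      rw [hidx]
    · by_cases h2 : (i' : ℕ) < N + (l : ℕ)
      · have hcast : (Fin.castSucc i' : Fin (N + 4)) < Fin.natAdd N l := by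
          rw [Fin.lt_def, Fin.coe_castSucc, Fin.coe_natAdd]
          omega
        rw [Fin.succAbove_of_castSucc_lt _ _ hcast]
        have hlt : ¬ ((Fin.castSucc i' : Fin (N + 4)) : ℕ) < N := by
          rwa [Fin.coe_castSucc]
        simp only [hf, dif_neg hlt, Bmat, Matrix.of_apply, dif_neg h, Function.comp_apply]
        congr 1
        apply congrArg zv
        apply Fin.ext
        have hsa : l.succAbove (⟨(i' : ℕ) - N, by omega⟩ : Fin 3)
            = Fin.castSucc (⟨(i' : ℕ) - N, by omega⟩ : Fin 3) := by
          apply Fin.succAbove_of_castSucc_lt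
          rw [Fin.lt_def, Fin.coe_castSucc]
          show (i' : ℕ) - N < (l : ℕ)
          omega
        rw [hsa]
        show (i' : ℕ) - N = (i' : ℕ) - N
        rfl
      · have hcast : Fin.natAdd N l ≤ Fin.castSucc i' := by
          rw [Fin.le_def, Fin.coe_castSucc, Fin.coe_natAdd]
          omega
        rw [Fin.succAbove_of_le_castSucc _ _ hcast]
        have hlt : ¬ ((Fin.succ i' : Fin (N + 4)) : ℕ) < N := by
          rw [Fin.val_succ]; omega
        simp only [hf, dif_neg hlt, Bmat, Matrix.of_apply, dif_neg h, Function.comp_apply]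
        congr 1
        apply congrArg zv
        apply Fin.ext
        have hsa : l.succAbove (⟨(i' : ℕ) - N, by omega⟩ : Fin 3)
            = Fin.succ (⟨(i' : ℕ) - N, by omega⟩ : Fin 3) := by
          apply Fin.succAbove_of_le_castSucc
          rw [Fin.le_def, Fin.coe_castSucc]
          show (l : ℕ) ≤ (i' : ℕ) - N
          omega
        rw [hsa]
        show (i' : ℕ) + 1 - N = ((i' : ℕ) - N) + 1
        omega
  -- evaluate w-vectors
  have hw0 : zv ∘ (0 : Fin 4).succAbove = ![z1, z2, z3] := by
    funext t; fin_cases t <;> rfl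
  have hw1 : zv ∘ (1 : Fin 4).succAbove = ![z0, z2, z3] := by
    funext t; fin_cases t <;> rfl
  have hw2 : zv ∘ (2 : Fin 4).succAbove = ![z0, z1, z3] := by
    funext t; fin_cases t <;> rfl
  have hw3 : zv ∘ (3 : Fin 4).succAbove = ![z0, z1, z2] := by
    funext t; fin_cases t <;> rfl
  have hGl : ∀ l : Fin 4, G (Fin.natAdd N l) = (-1 : ℂ) ^ (N + (l : ℕ)) *
      (Bmat 3 u (zv ∘ l.succAbove)).det * ((-1 : ℂ) ^ N * CAS (app1 (zv l) u)) := by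
    intro l
    rw [hG]
    simp only
    rw [hDl l, hφl l, Fin.coe_natAdd]
  rw [hGl 0, hGl 1, hGl 2, hGl 3, hw0, hw1, hw2, hw3] at hex
  rw [b3, b3, b3, b3] at hex
  simp only [Matrix.cons_val_zero, Matrix.cons_val_one, Matrix.head_cons,
    Matrix.cons_val_two, Matrix.tail_cons] at hex
  have hzv0 : zv 0 = z0 := rfl
  have hzv1 : zv 1 = z1 := rfl
  have hzv2 : zv 2 = z2 := rfl
  have hzv3 : zv 3 = z3 := rfl
  rw [hzv0, hzv1, hzv2, hzv3] at hex
  have hS : (-1 : ℂ) ^ N * (-1 : ℂ) ^ N = 1 := by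
    rw [← pow_add]
    have h2 : N + N = 2 * N := by ring
    rw [h2, pow_mul]
    norm_num
  have e0 : (-1 : ℂ) ^ (N + (((0 : Fin 4)) : ℕ)) = (-1 : ℂ) ^ N := by
    show (-1 : ℂ) ^ (N + 0) = (-1 : ℂ) ^ N
    rw [Nat.add_zero]
  have e1 : (-1 : ℂ) ^ (N + (((1 : Fin 4)) : ℕ)) = -(-1 : ℂ) ^ N := by
    show (-1 : ℂ) ^ (N + 1) = -(-1 : ℂ) ^ N
    rw [pow_add]; norm_num
  have e2 : (-1 : ℂ) ^ (N + (((2 : Fin 4)) : ℕ)) = (-1 : ℂ) ^ N := by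
    show (-1 : ℂ) ^ (N + 2) = (-1 : ℂ) ^ N
    rw [pow_add]; norm_num
  have e3 : (-1 : ℂ) ^ (N + (((3 : Fin 4)) : ℕ)) = -(-1 : ℂ) ^ N := by
    show (-1 : ℂ) ^ (N + 3) = -(-1 : ℂ) ^ N
    rw [pow_add]; norm_num
  rw [e0, e1, e2, e3] at hex
  linear_combination (-((-1 : ℂ) ^ N)) * hex +
    (-((z1 - z2) * ((z1 - z3) * (z2 - z3)) * (CAS (app1 z0 u) * CAS (app1 z1 (app1 z2 (app1 z3 u))))
  - (z0 - z2) * ((z0 - z3) * (z2 - z3)) * (CAS (app1 z1 u) * CAS (app1 z0 (app1 z2 (app1 z3 u))))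
  + (z0 - z1) * ((z0 - z3) * (z1 - z3)) * (CAS (app1 z2 u) * CAS (app1 z0 (app1 z1 (app1 z3 u))))
  - (z0 - z1) * ((z0 - z2) * (z1 - z2)) * (CAS (app1 z3 u) * CAS (app1 z0 (app1 z1 (app1 z2 u)))))
    * ((-1 : ℂ) ^ N * (-1 : ℂ) ^ N + 1)) * hS

end Stmt15Aux

open Stmt15Aux in
theorem stmt_15 (N : ℕ) (hN : 1 ≤ N) (a1 a2 a3 a4 : ℂ) (k ρp ρm : Fin N → ℂ)
    (ha1 : ∀ j, a1 + k j ≠ 0) (ha1' : ∀ j, a1 - k j ≠ 0)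
    (ha2 : ∀ j, a2 + k j ≠ 0) (ha2' : ∀ j, a2 - k j ≠ 0)
    (ha3 : ∀ j, a3 + k j ≠ 0) (ha3' : ∀ j, a3 - k j ≠ 0)
    (ha4 : ∀ j, a4 + k j ≠ 0) (ha4' : ∀ j, a4 - k j ≠ 0)
    (ψ : Fin N → ℤ → ℤ → ℤ → ℤ → ℂ)
    (hψ : ∀ j n1 n2 n3 n4, ψ j n1 n2 n3 n4 =
      ρp j * (a1 + k j) ^ n1 * (a2 + k j) ^ n2 * (a3 + k j) ^ n3 * (a4 + k j) ^ n4 +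
      ρm j * (a1 - k j) ^ n1 * (a2 - k j) ^ n2 * (a3 - k j) ^ n3 * (a4 - k j) ^ n4)
    (τ : ℤ → ℤ → ℤ → ℤ → ℂ)
    (hτ : ∀ n1 n2 n3 n4, τ n1 n2 n3 n4 =
      (Matrix.of fun j m : Fin N => ψ j (n1 + (m.1 : ℤ)) n2 n3 n4).det) :
    ∀ n1 n2 n3 n4 : ℤ,
      ((a2 - a3) * (a3 - a4) * (a2 - a4) * τ n1 n2 n3 n4 * τ (n1 + 1) (n2 + 1) (n3 + 1) (n4 + 1) -
        (a1 + a3) * (a3 - a4) * (a1 + a4) * τ (n1 + 1) (n2 + 1) n3 n4 * τ n1 n2 (n3 + 1) (n4 + 1) +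
        (a1 + a2) * (a2 - a4) * (a1 + a4) * τ (n1 + 1) n2 (n3 + 1) n4 * τ n1 (n2 + 1) n3 (n4 + 1) -
        (a1 + a2) * (a2 - a3) * (a1 + a3) * τ (n1 + 1) n2 n3 (n4 + 1) * τ n1 (n2 + 1) (n3 + 1) n4 = 0) ∧
      ((a2 + a3) * (a3 - a4) * (a2 + a4) * τ (n1 + 1) (n2 + 1) n3 n4 * τ n1 n2 (n3 + 1) (n4 + 1) -
        (a1 - a3) * (a3 - a4) * (a1 - a4) * τ n1 n2 n3 n4 * τ (n1 + 1) (n2 + 1) (n3 + 1) (n4 + 1) -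
        (a1 + a2) * (a2 + a4) * (a1 - a4) * τ n1 (n2 + 1) (n3 + 1) n4 * τ (n1 + 1) n2 n3 (n4 + 1) +
        (a1 + a2) * (a2 + a3) * (a1 - a3) * τ n1 (n2 + 1) n3 (n4 + 1) * τ (n1 + 1) n2 (n3 + 1) n4 = 0) ∧
      (-((a2 + a3) * (a3 + a4) * (a2 - a4)) * τ (n1 + 1) n2 (n3 + 1) n4 * τ n1 (n2 + 1) n3 (n4 + 1) +
        (a1 + a3) * (a3 + a4) * (a1 - a4) * τ n1 (n2 + 1) (n3 + 1) n4 * τ (n1 + 1) n2 n3 (n4 + 1) +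
        (a1 - a2) * (a2 - a4) * (a1 - a4) * τ n1 n2 n3 n4 * τ (n1 + 1) (n2 + 1) (n3 + 1) (n4 + 1) -
        (a1 - a2) * (a2 + a3) * (a1 + a3) * τ n1 n2 (n3 + 1) (n4 + 1) * τ (n1 + 1) (n2 + 1) n3 n4 = 0) ∧
      ((a2 - a3) * (a3 + a4) * (a2 + a4) * τ (n1 + 1) n2 n3 (n4 + 1) * τ n1 (n2 + 1) (n3 + 1) n4 -
        (a1 - a3) * (a3 + a4) * (a1 + a4) * τ n1 (n2 + 1) n3 (n4 + 1) * τ (n1 + 1) n2 (n3 + 1) n4 +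
        (a1 - a2) * (a2 + a4) * (a1 + a4) * τ n1 n2 (n3 + 1) (n4 + 1) * τ (n1 + 1) (n2 + 1) n3 n4 -
        (a1 - a2) * (a2 - a3) * (a1 - a3) * τ n1 n2 n3 n4 * τ (n1 + 1) (n2 + 1) (n3 + 1) (n4 + 1) = 0) := by
  intro n1 n2 n3 n4
  -- sequence shift lemmas
  have hseq1 : ∀ m1 m2 m3 m4 : ℤ, app1 (0 : ℂ) (fun m j => ψ j (m1 + m) m2 m3 m4)
      = fun m j => ψ j ((m1 + 1) + m) m2 m3 m4 := by
    intro m1 m2 m3 m4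
    funext m j
    simp only [app1]
    rw [show m1 + (m + 1) = (m1 + 1) + m from by ring]
    ring
  have hseq2 : ∀ m1 m2 m3 m4 : ℤ, app1 (a1 - a2) (fun m j => ψ j (m1 + m) m2 m3 m4)
      = fun m j => ψ j (m1 + m) (m2 + 1) m3 m4 := by
    intro m1 m2 m3 m4
    funext m j
    simp only [app1]
    rw [show m1 + (m + 1) = (m1 + m) + 1 from by ring, hψ, hψ, hψ,
      zpow_add_one₀ (ha1 j), zpow_add_one₀ (ha1' j), zpow_add_one₀ (ha2 j),
      zpow_add_one₀ (ha2' j)]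
    ring
  have hseq3 : ∀ m1 m2 m3 m4 : ℤ, app1 (a1 - a3) (fun m j => ψ j (m1 + m) m2 m3 m4)
      = fun m j => ψ j (m1 + m) m2 (m3 + 1) m4 := by
    intro m1 m2 m3 m4
    funext m j
    simp only [app1]
    rw [show m1 + (m + 1) = (m1 + m) + 1 from by ring, hψ, hψ, hψ,
      zpow_add_one₀ (ha1 j), zpow_add_one₀ (ha1' j), zpow_add_one₀ (ha3 j),
      zpow_add_one₀ (ha3' j)]
    ring
  have hseq4 : ∀ m1 m2 m3 m4 : ℤ, app1 (a1 - a4) (fun m j => ψ j (m1 + m) m2 m3 m4)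
      = fun m j => ψ j (m1 + m) m2 m3 (m4 + 1) := by
    intro m1 m2 m3 m4
    funext m j
    simp only [app1]
    rw [show m1 + (m + 1) = (m1 + m) + 1 from by ring, hψ, hψ, hψ,
      zpow_add_one₀ (ha1 j), zpow_add_one₀ (ha1' j), zpow_add_one₀ (ha4 j),
      zpow_add_one₀ (ha4' j)]
    ring
  -- Casoratian of plain sequence is τ
  have hCASτ : ∀ m1 m2 m3 m4 : ℤ, CAS (fun m j => ψ j (m1 + m) m2 m3 m4) = τ m1 m2 m3 m4 := by
    intro m1 m2 m3 m4
    rw [hτ]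
    rfl
  -- Casoratian with the recurrence-pair root, direction 1
  have hD1 : ∀ m1 m2 m3 m4 : ℤ,
      CAS (app1 (2 * a1) (fun m j => ψ j ((m1 + 1) + m) m2 m3 m4))
      = (∏ j, -((a1 - k j) * (a1 + k j))) * τ m1 m2 m3 m4 := by
    intro m1 m2 m3 m4
    have hpt : app1 (2 * a1) (fun m j => ψ j ((m1 + 1) + m) m2 m3 m4)
        = fun m j => (-((a1 - k j) * (a1 + k j))) * ψ j (m1 + m) m2 m3 m4 := by
      funext m j
      simp only [app1]
      rw [show (m1 + 1) + (m + 1) = ((m1 + m) + 1) + 1 from by ring,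
        show (m1 + 1) + m = (m1 + m) + 1 from by ring, hψ, hψ, hψ,
        zpow_add_one₀ (ha1 j), zpow_add_one₀ (ha1' j),
        zpow_add_one₀ (ha1 j), zpow_add_one₀ (ha1' j)]
      ring
    rw [hpt]
    calc CAS (fun m j => (-((a1 - k j) * (a1 + k j))) * ψ j (m1 + m) m2 m3 m4)
        = (Matrix.of fun (i j : Fin N) => (fun j => -((a1 - k j) * (a1 + k j))) i *
            (Matrix.of fun (j m : Fin N) => ψ j (m1 + ((m : ℕ) : ℤ)) m2 m3 m4) i j).det := rfl
      _ = (∏ j, -((a1 - k j) * (a1 + k j))) *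
            (Matrix.of fun (j m : Fin N) => ψ j (m1 + ((m : ℕ) : ℤ)) m2 m3 m4).det :=
          Matrix.det_mul_column _ _
      _ = (∏ j, -((a1 - k j) * (a1 + k j))) * τ m1 m2 m3 m4 := by rw [hτ]
  have hD2 : ∀ m1 m2 m3 m4 : ℤ,
      CAS (app1 (a1 + a2) (fun m j => ψ j (m1 + m) (m2 + 1) m3 m4))
      = (∏ j, -((a2 - k j) * (a2 + k j))) * τ m1 m2 m3 m4 := by
    intro m1 m2 m3 m4
    have hpt : app1 (a1 + a2) (fun m j => ψ j (m1 + m) (m2 + 1) m3 m4)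
        = fun m j => (-((a2 - k j) * (a2 + k j))) * ψ j (m1 + m) m2 m3 m4 := by
      funext m j
      simp only [app1]
      rw [show m1 + (m + 1) = (m1 + m) + 1 from by ring, hψ, hψ, hψ,
        zpow_add_one₀ (ha1 j), zpow_add_one₀ (ha1' j),
        zpow_add_one₀ (ha2 j), zpow_add_one₀ (ha2' j)]
      ring
    rw [hpt]
    calc CAS (fun m j => (-((a2 - k j) * (a2 + k j))) * ψ j (m1 + m) m2 m3 m4)
        = (Matrix.of fun (i j : Fin N) => (fun j => -((a2 - k j) * (a2 + k j))) i *
            (Matrix.of fun (j m : Fin N) => ψ j (m1 + ((m : ℕ) : ℤ)) m2 m3 m4) i j).det := rfl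
      _ = (∏ j, -((a2 - k j) * (a2 + k j))) *
            (Matrix.of fun (j m : Fin N) => ψ j (m1 + ((m : ℕ) : ℤ)) m2 m3 m4).det :=
          Matrix.det_mul_column _ _
      _ = (∏ j, -((a2 - k j) * (a2 + k j))) * τ m1 m2 m3 m4 := by rw [hτ]
  have hD3 : ∀ m1 m2 m3 m4 : ℤ,
      CAS (app1 (a1 + a3) (fun m j => ψ j (m1 + m) m2 (m3 + 1) m4))
      = (∏ j, -((a3 - k j) * (a3 + k j))) * τ m1 m2 m3 m4 := by
    intro m1 m2 m3 m4
    have hpt : app1 (a1 + a3) (fun m j => ψ j (m1 + m) m2 (m3 + 1) m4)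
        = fun m j => (-((a3 - k j) * (a3 + k j))) * ψ j (m1 + m) m2 m3 m4 := by
      funext m j
      simp only [app1]
      rw [show m1 + (m + 1) = (m1 + m) + 1 from by ring, hψ, hψ, hψ,
        zpow_add_one₀ (ha1 j), zpow_add_one₀ (ha1' j),
        zpow_add_one₀ (ha3 j), zpow_add_one₀ (ha3' j)]
      ring
    rw [hpt]
    calc CAS (fun m j => (-((a3 - k j) * (a3 + k j))) * ψ j (m1 + m) m2 m3 m4)
        = (Matrix.of fun (i j : Fin N) => (fun j => -((a3 - k j) * (a3 + k j))) i *
            (Matrix.of fun (j m : Fin N) => ψ j (m1 + ((m : ℕ) : ℤ)) m2 m3 m4) i j).det := rfl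
      _ = (∏ j, -((a3 - k j) * (a3 + k j))) *
            (Matrix.of fun (j m : Fin N) => ψ j (m1 + ((m : ℕ) : ℤ)) m2 m3 m4).det :=
          Matrix.det_mul_column _ _
      _ = (∏ j, -((a3 - k j) * (a3 + k j))) * τ m1 m2 m3 m4 := by rw [hτ]
  have hD4 : ∀ m1 m2 m3 m4 : ℤ,
      CAS (app1 (a1 + a4) (fun m j => ψ j (m1 + m) m2 m3 (m4 + 1)))
      = (∏ j, -((a4 - k j) * (a4 + k j))) * τ m1 m2 m3 m4 := by
    intro m1 m2 m3 m4
    have hpt : app1 (a1 + a4) (fun m j => ψ j (m1 + m) m2 m3 (m4 + 1))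
        = fun m j => (-((a4 - k j) * (a4 + k j))) * ψ j (m1 + m) m2 m3 m4 := by
      funext m j
      simp only [app1]
      rw [show m1 + (m + 1) = (m1 + m) + 1 from by ring, hψ, hψ, hψ,
        zpow_add_one₀ (ha1 j), zpow_add_one₀ (ha1' j),
        zpow_add_one₀ (ha4 j), zpow_add_one₀ (ha4' j)]
      ring
    rw [hpt]
    calc CAS (fun m j => (-((a4 - k j) * (a4 + k j))) * ψ j (m1 + m) m2 m3 m4)
        = (Matrix.of fun (i j : Fin N) => (fun j => -((a4 - k j) * (a4 + k j))) i *
            (Matrix.of fun (j m : Fin N) => ψ j (m1 + ((m : ℕ) : ℤ)) m2 m3 m4) i j).det := rfl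
      _ = (∏ j, -((a4 - k j) * (a4 + k j))) *
            (Matrix.of fun (j m : Fin N) => ψ j (m1 + ((m : ℕ) : ℤ)) m2 m3 m4).det :=
          Matrix.det_mul_column _ _
      _ = (∏ j, -((a4 - k j) * (a4 + k j))) * τ m1 m2 m3 m4 := by rw [hτ]
  have hP1 : (∏ j, -((a1 - k j) * (a1 + k j))) ≠ 0 :=
    Finset.prod_ne_zero_iff.mpr fun j _ => neg_ne_zero.mpr (mul_ne_zero (ha1' j) (ha1 j))
  have hP2 : (∏ j, -((a2 - k j) * (a2 + k j))) ≠ 0 :=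
    Finset.prod_ne_zero_iff.mpr fun j _ => neg_ne_zero.mpr (mul_ne_zero (ha2' j) (ha2 j))
  have hP3 : (∏ j, -((a3 - k j) * (a3 + k j))) ≠ 0 :=
    Finset.prod_ne_zero_iff.mpr fun j _ => neg_ne_zero.mpr (mul_ne_zero (ha3' j) (ha3 j))
  have hP4 : (∏ j, -((a4 - k j) * (a4 + k j))) ≠ 0 :=
    Finset.prod_ne_zero_iff.mpr fun j _ => neg_ne_zero.mpr (mul_ne_zero (ha4' j) (ha4 j))
  refine ⟨?_, ?_, ?_, ?_⟩
  · -- equation A1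
    have M1 := master (fun m j => ψ j ((n1 + 1) + m) n2 n3 n4)
      (2 * a1) (a1 - a2) (a1 - a3) (a1 - a4)
    simp only [hseq4, hseq3, hseq2, hD1, hCASτ] at M1
    have key : (∏ j, -((a1 - k j) * (a1 + k j))) *
        ((a2 - a3) * (a3 - a4) * (a2 - a4) * τ n1 n2 n3 n4 * τ (n1 + 1) (n2 + 1) (n3 + 1) (n4 + 1) -
        (a1 + a3) * (a3 - a4) * (a1 + a4) * τ (n1 + 1) (n2 + 1) n3 n4 * τ n1 n2 (n3 + 1) (n4 + 1) +
        (a1 + a2) * (a2 - a4) * (a1 + a4) * τ (n1 + 1) n2 (n3 + 1) n4 * τ n1 (n2 + 1) n3 (n4 + 1) -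
        (a1 + a2) * (a2 - a3) * (a1 + a3) * τ (n1 + 1) n2 n3 (n4 + 1) * τ n1 (n2 + 1) (n3 + 1) n4) = 0 := by
      linear_combination (-1 : ℂ) * M1
    exact (mul_eq_zero.mp key).resolve_left hP1
  · -- equation A2
    have M2 := master (fun m j => ψ j (n1 + m) (n2 + 1) n3 n4)
      (a1 + a2) (0 : ℂ) (a1 - a3) (a1 - a4)
    simp only [hseq4, hseq3, hseq1, hD2, hCASτ] at M2
    have key : (∏ j, -((a2 - k j) * (a2 + k j))) *
        ((a2 + a3) * (a3 - a4) * (a2 + a4) * τ (n1 + 1) (n2 + 1) n3 n4 * τ n1 n2 (n3 + 1) (n4 + 1) -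
        (a1 - a3) * (a3 - a4) * (a1 - a4) * τ n1 n2 n3 n4 * τ (n1 + 1) (n2 + 1) (n3 + 1) (n4 + 1) -
        (a1 + a2) * (a2 + a4) * (a1 - a4) * τ n1 (n2 + 1) (n3 + 1) n4 * τ (n1 + 1) n2 n3 (n4 + 1) +
        (a1 + a2) * (a2 + a3) * (a1 - a3) * τ n1 (n2 + 1) n3 (n4 + 1) * τ (n1 + 1) n2 (n3 + 1) n4) = 0 := by
      linear_combination (1 : ℂ) * M2
    exact (mul_eq_zero.mp key).resolve_left hP2
  · -- equation A3
    have M3 := master (fun m j => ψ j (n1 + m) n2 (n3 + 1) n4)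
      (a1 + a3) (0 : ℂ) (a1 - a2) (a1 - a4)
    simp only [hseq4, hseq2, hseq1, hD3, hCASτ] at M3
    have key : (∏ j, -((a3 - k j) * (a3 + k j))) *
        (-((a2 + a3) * (a3 + a4) * (a2 - a4)) * τ (n1 + 1) n2 (n3 + 1) n4 * τ n1 (n2 + 1) n3 (n4 + 1) +
        (a1 + a3) * (a3 + a4) * (a1 - a4) * τ n1 (n2 + 1) (n3 + 1) n4 * τ (n1 + 1) n2 n3 (n4 + 1) +
        (a1 - a2) * (a2 - a4) * (a1 - a4) * τ n1 n2 n3 n4 * τ (n1 + 1) (n2 + 1) (n3 + 1) (n4 + 1) -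
        (a1 - a2) * (a2 + a3) * (a1 + a3) * τ n1 n2 (n3 + 1) (n4 + 1) * τ (n1 + 1) (n2 + 1) n3 n4) = 0 := by
      linear_combination (-1 : ℂ) * M3
    exact (mul_eq_zero.mp key).resolve_left hP3
  · -- equation A4
    have M4 := master (fun m j => ψ j (n1 + m) n2 n3 (n4 + 1))
      (a1 + a4) (0 : ℂ) (a1 - a2) (a1 - a3)
    simp only [hseq3, hseq2, hseq1, hD4, hCASτ] at M4
    have key : (∏ j, -((a4 - k j) * (a4 + k j))) *
        ((a2 - a3) * (a3 + a4) * (a2 + a4) * τ (n1 + 1) n2 n3 (n4 + 1) * τ n1 (n2 + 1) (n3 + 1) n4 -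
        (a1 - a3) * (a3 + a4) * (a1 + a4) * τ n1 (n2 + 1) n3 (n4 + 1) * τ (n1 + 1) n2 (n3 + 1) n4 +
        (a1 - a2) * (a2 + a4) * (a1 + a4) * τ n1 n2 (n3 + 1) (n4 + 1) * τ (n1 + 1) (n2 + 1) n3 n4 -
        (a1 - a2) * (a2 - a3) * (a1 - a3) * τ n1 n2 n3 n4 * τ (n1 + 1) (n2 + 1) (n3 + 1) (n4 + 1)) = 0 := by
      linear_combination (1 : ℂ) * M4
    exact (mul_eq_zero.mp key).resolve_left hP4
end
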